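/- Every multiple-labelled network realizing a ploidy profile m can be transformed by a finite sequence of split operations into a multiple-labelled tree realizing m. -/

import Mathlib

/-!
Formalization preamble for "Autopolyploidy, allopolyploidy, and phylogenetic
networks with horizontal arcs" (Huber & Maher).

Networks are finite directed multigraphs whose vertices and arcs are (finitely
many) natural numbers; parallel arcs (beads) are allowed, loops are not.
-/

namespace Ploidy

/-- A finite directed multigraph: both vertex names and arc identifiers are
natural numbers; `src`/`tgt` give the endpoints of each arc. -/
structure Net where
  verts : Finset ℕ
  arcs : Finset ℕ
  src : ℕ → ℕ
  tgt : ℕ → ℕ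

/-- The indegree of a vertex. -/
def inDeg (G : Net) (v : ℕ) : ℕ := (G.arcs.filter fun a => G.tgt a = v).card

/-- The outdegree of a vertex. -/
def outDeg (G : Net) (v : ℕ) : ℕ := (G.arcs.filter fun a => G.src a = v).card

def IsLeafN (G : Net) (v : ℕ) : Prop := v ∈ G.verts ∧ inDeg G v = 1 ∧ outDeg G v = 0
def IsTreeVert (G : Net) (v : ℕ) : Prop := v ∈ G.verts ∧ inDeg G v = 1 ∧ outDeg G v = 2
def IsReticN (G : Net) (v : ℕ) : Prop := v ∈ G.verts ∧ inDeg G v = 2 ∧ outDeg G v = 1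
def IsRootN (G : Net) (v : ℕ) : Prop := v ∈ G.verts ∧ inDeg G v = 0

instance (G : Net) (v : ℕ) : Decidable (IsLeafN G v) :=
  decidable_of_iff (v ∈ G.verts ∧ inDeg G v = 1 ∧ outDeg G v = 0) Iff.rfl

/-- `IsWalk G l u v`: the list of arcs `l` forms a directed walk from `u` to `v`. -/
def IsWalk (G : Net) : List ℕ → ℕ → ℕ → Prop
  | [], u, v => u = v ∧ u ∈ G.verts
  | a :: l, u, v => a ∈ G.arcs ∧ G.src a = u ∧ IsWalk G l (G.tgt a) v

/-- The number of directed paths from `u` to `v` (in a DAG every directed walk is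
a path, and there are finitely many of them). -/
noncomputable def nPaths (G : Net) (u v : ℕ) : ℕ := Set.ncard {l : List ℕ | IsWalk G l u v}

/-- `a` is an arc from `u` to `v`. -/
def ArcFT (G : Net) (a u v : ℕ) : Prop := a ∈ G.arcs ∧ G.src a = u ∧ G.tgt a = v

/-- `u` is a parent of `v`. -/
def IsParent (G : Net) (u v : ℕ) : Prop := ∃ a, ArcFT G a u v

/-- `w` is below `u` (reachable from `u` by a directed walk, possibly `u = w`). -/
def BelowV (G : Net) (u w : ℕ) : Prop := ∃ l, IsWalk G l u w

/-- `v` is an end vertex of a pair of parallel arcs (a bead). -/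
def InBead (G : Net) (v : ℕ) : Prop :=
  ∃ a b, a ∈ G.arcs ∧ b ∈ G.arcs ∧ a ≠ b ∧ G.src a = G.src b ∧ G.tgt a = G.tgt b ∧
    (G.src a = v ∨ G.tgt a = v)

/-- `G` is beadless: there is no pair of parallel arcs. -/
def Beadless (G : Net) : Prop := ∀ v, ¬ InBead G v

/-- `G` is a (rooted, binary) phylogenetic network in the sense of Huber–Maher:
a rooted DAG, possibly with beads but without loops, with a unique root of
indegree 0 and outdegree 2, all of whose other vertices are leaves, tree
vertices or reticulation vertices. -/
structure IsPhylo (G : Net) : Prop where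
  src_mem : ∀ a ∈ G.arcs, G.src a ∈ G.verts
  tgt_mem : ∀ a ∈ G.arcs, G.tgt a ∈ G.verts
  no_loop : ∀ a ∈ G.arcs, G.src a ≠ G.tgt a
  acyclic : ∀ (v : ℕ) (l : List ℕ), l ≠ [] → ¬ IsWalk G l v v
  root_exu : ∃! r, IsRootN G r
  root_out : ∀ r, IsRootN G r → outDeg G r = 2
  types : ∀ v ∈ G.verts, IsRootN G v ∨ IsLeafN G v ∨ IsTreeVert G v ∨ IsReticN G v

/-- An HGT-consistent labelling: (P1), (P2) and (P3) (the latter required only for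
reticulation vertices not contained in beads). -/
def IsHGT (G : Net) (t : ℕ → ℝ) : Prop :=
  (∀ v ∈ G.verts, 0 ≤ t v) ∧
  (∀ a ∈ G.arcs,
      (IsReticN G (G.tgt a) → t (G.src a) ≤ t (G.tgt a)) ∧
      (¬ IsReticN G (G.tgt a) → t (G.src a) < t (G.tgt a))) ∧
  (∀ u ∈ G.verts, ¬ IsLeafN G u → ∃ v, IsParent G u v ∧ t u < t v) ∧
  (∀ v, IsReticN G v → ¬ InBead G v → ∃! u, IsParent G u v ∧ t u = t v)

/-- `v` is a reticulation vertex (not contained in a bead) violating (P3). -/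
def ViolatesP3 (G : Net) (t : ℕ → ℝ) (v : ℕ) : Prop :=
  IsReticN G v ∧ ¬ InBead G v ∧ ¬ (∃! u, IsParent G u v ∧ t u = t v)

/-- A weak HGT-consistent labelling: (P1), (P2) and (P3'): at most one reticulation
vertex `v`, with distinct parents `u₁, u₂` such that `u₂` is below `u₁` and
`t u₁ ≠ t v ≠ t u₂`, violates (P3). -/
def IsWeakHGT (G : Net) (t : ℕ → ℝ) : Prop :=
  (∀ v ∈ G.verts, 0 ≤ t v) ∧
  (∀ a ∈ G.arcs,
      (IsReticN G (G.tgt a) → t (G.src a) ≤ t (G.tgt a)) ∧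
      (¬ IsReticN G (G.tgt a) → t (G.src a) < t (G.tgt a))) ∧
  (∀ u ∈ G.verts, ¬ IsLeafN G u → ∃ v, IsParent G u v ∧ t u < t v) ∧
  (∀ v w, ViolatesP3 G t v → ViolatesP3 G t w → v = w) ∧
  (∀ v, ViolatesP3 G t v →
      ∃ u1 u2, u1 ≠ u2 ∧ IsParent G u1 v ∧ IsParent G u2 v ∧ BelowV G u1 u2 ∧
        t u1 ≠ t v ∧ t u2 ≠ t v)

/-! ### Ploidy profiles and the simplification sequence -/

/-- A ploidy profile: a nonempty descending list of positive integers; the entry at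
(0-based) position `i` is indexed by the taxon `x_{i+1}`. -/
def IsProfileL (l : List ℕ) : Prop := l ≠ [] ∧ l.Pairwise (· ≥ ·) ∧ ∀ x ∈ l, 1 ≤ x

/-- A simple ploidy profile: first component at least 2, all other components 1. -/
def IsSimpleP (l : List ℕ) : Prop := l ≠ [] ∧ 2 ≤ l.headI ∧ ∀ x ∈ l.tail, x = 1

/-- A strictly simple ploidy profile. -/
def IsStrictlySimpleP (l : List ℕ) : Prop := IsSimpleP l ∧ l.length = 1

/-- Insert `x` into a descending list, directly after the last occurrence of the
value `x` (i.e. after all entries `≥ x`). -/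
def insertDesc (x : ℕ) : List ℕ → List ℕ
  | [] => [x]
  | y :: ys => if x ≤ y then y :: insertDesc x ys else x :: y :: ys

/-- One step of the simplification process for ploidy profiles; simple profiles are
fixed points.  With `α = m₁ - m₂`: if `α = 0` delete `m₁`; if `α > m₂` replace `m₁`
by `α`; if `0 < α ≤ m₂` delete `m₁` and insert `α` directly after the last
occurrence of the value `α`. -/
def simpStep (l : List ℕ) : List ℕ :=
  if 2 ≤ l.headI ∧ ∀ x ∈ l.tail, x = 1 then l
  else
    match l with
    | m1 :: m2 :: rest =>
        if m1 = m2 then m2 :: rest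
        else if m2 < m1 - m2 then (m1 - m2) :: m2 :: rest
        else insertDesc (m1 - m2) (m2 :: rest)
    | _ => l

/-- `mt` is the (simple) terminal element of the simplification sequence of `m`. -/
def IsTerminal (m mt : List ℕ) : Prop := IsSimpleP mt ∧ ∃ k, simpStep^[k] m = mt

/-- A practical ploidy profile: simple but not strictly simple, or `(2^l)`, `l ≥ 1`. -/
def Practical (l : List ℕ) : Prop :=
  (IsSimpleP l ∧ 2 ≤ l.length) ∨ (l.length = 1 ∧ ∃ j, 1 ≤ j ∧ l.headI = 2 ^ j)

/-- An arc-rich (strictly simple) ploidy profile: the binary representation of its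
single component has dimension at least two. -/
def ArcRich (l : List ℕ) : Prop :=
  l.length = 1 ∧ 2 ≤ l.headI ∧ 2 ≤ (Nat.bits l.headI).count true

/-! ### Realizations of ploidy profiles -/

/-- A network together with an indexing of its leaves by the positions of a
ploidy profile. -/
structure LNet where
  net : Net
  leaf : ℕ → ℕ

/-- `R` is a phylogenetic network realizing the ploidy profile `m`: the leaves of
`R.net` are bijectively indexed by the positions of `m` and, for every `i`, the
number of directed paths from the root to the leaf `R.leaf i` is the `i`-th
component of `m`. -/
def RealizesL (R : LNet) (m : List ℕ) : Prop :=
  IsPhylo R.net ∧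
  (∀ i < m.length, IsLeafN R.net (R.leaf i)) ∧
  (∀ i j, i < m.length → j < m.length → R.leaf i = R.leaf j → i = j) ∧
  (∀ v, IsLeafN R.net v → ∃ i < m.length, R.leaf i = v) ∧
  (∀ i < m.length, ∀ r, IsRootN R.net r → nPaths R.net r (R.leaf i) = m.getD i 0)

/-! ### Concrete constructions: bead chains and the core network `B(m)` -/

/-- Build a network from a list of arcs (as (source, target) pairs); arc
identifiers are positions in the list, so repeated pairs yield beads. -/
def mkNet (l : List (ℕ × ℕ)) : Net where
  verts := (l.map Prod.fst ++ l.map Prod.snd).toFinset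
  arcs := Finset.range l.length
  src := fun i => (l.getD i (0, 0)).1
  tgt := fun i => (l.getD i (0, 0)).2

/-- The chain `B(l)` of `l` beads with a pendant leaf: vertex `2*j` is the tree
vertex of the `(j+1)`-st bead, `2*j+1` its reticulation vertex `h_{j+1}`, there is
an arc from `h_j` to the tree vertex of the next bead, and `2*l` is the pendant
leaf `x₁` attached by the arc `(h_l, x₁)`. -/
def beadChain (l : ℕ) : Net :=
  mkNet ((List.range l).flatMap fun j => [(2*j, 2*j+1), (2*j, 2*j+1), (2*j+1, 2*j+2)])

/-- The decreasing list `(i₁, …, i_k)` of exponents of the binary representation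
of `m₁`. -/
def expList (m1 : ℕ) : List ℕ :=
  ((List.range (m1+1)).filter fun j => m1.testBit j).reverse

/-- First vertex code available for the leaves `x_2, …, x_n` in `BNet`. -/
def xBase (m1 : ℕ) : ℕ := 2 * (expList m1).headI + 2 * (expList m1).length + 10

/-- The arcs of the core network `B(m)` for the simple profile `(m₁, 1, …, 1)` on
`n` taxa: a chain of `i₁` beads with pendant leaf `x₁ = 0` (root is the vertex
`2`), one root arc subdivided by `s_k` and, for `2 ≤ j ≤ k`, an arc `(s_j, s_j')`
where `s_j'` subdivides the outgoing arc of the reticulation vertex having exactly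
`i_j` reticulation vertices strictly below it and `s_2, …, s_{k-1}` subdivide the
arc `(s_k, s_k')`; if `n ≥ 2` a caterpillar tree on the leaves `x_2, …, x_n`
(codes `xBase m₁ + i`) is attached via a subdivision vertex `w` (placed on a root
arc if `k = 1`, on `(s_k, s_k')` if `k = 2`, and on `(s_{k-1}, s_k')` if `k ≥ 3`). -/
def BArcs (m1 n : ℕ) : List (ℕ × ℕ) :=
  let E := expList m1
  let k := E.length
  let i1 := E.headI
  let hv : ℕ → ℕ := fun j => 2*j + 1
  let tv : ℕ → ℕ := fun j => 2*j
  let nxt : ℕ → ℕ := fun j => if j = i1 then 0 else 2*j + 2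
  let S' : ℕ → ℕ := fun j => 2*i1 + 2 + j
  let P : ℕ → ℕ := fun j => 2*i1 + k + 2 + j
  let w : ℕ := 2*i1 + 2*k + 4
  let L : ℕ := 2*i1 + 2*k + 10
  let x : ℕ → ℕ := fun i => L + i
  let cv : ℕ → ℕ := fun i => L + n + i
  let r : ℕ → ℕ := fun t => i1 - E.getD (t-1) 0
  let rootArcs : List (ℕ × ℕ) :=
    if 2 ≤ k then [(tv 1, hv 1), (tv 1, P k), (P k, hv 1)]
    else if 2 ≤ n then [(tv 1, hv 1), (tv 1, w), (w, hv 1)]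
    else [(tv 1, hv 1), (tv 1, hv 1)]
  let otherBeads : List (ℕ × ℕ) :=
    (List.range' 2 (i1 - 1)).flatMap fun j => [(tv j, hv j), (tv j, hv j)]
  let chainArcs : List (ℕ × ℕ) :=
    (List.range' 1 i1).flatMap fun j =>
      match (List.range' 2 (k-1)).find? (fun t => r t == j) with
      | some t => [(hv j, S' t), (S' t, nxt j)]
      | none => [(hv j, nxt j)]
  let sChain : List ℕ :=
    [P k] ++ (List.range' 2 (k-2)).map P ++ (if 2 ≤ n then [w] else []) ++ [S' k]
  let sArcs : List (ℕ × ℕ) :=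
    if 2 ≤ k then (sChain.zip sChain.tail) ++ (List.range' 2 (k-2)).map (fun j => (P j, S' j))
    else []
  let catArcs : List (ℕ × ℕ) :=
    if n ≤ 1 then []
    else if n = 2 then [(w, x 2)]
    else [(w, cv 2)] ++
      ((List.range' 2 (n-3)).flatMap fun i => [(cv i, x i), (cv i, cv (i+1))]) ++
      [(cv (n-1), x (n-1)), (cv (n-1), x n)]
  rootArcs ++ otherBeads ++ chainArcs ++ sArcs ++ catArcs

/-- The core network `B(m)` for a simple profile with first component `m1` on `n`
taxa. -/
def BNet (m1 n : ℕ) : Net := mkNet (BArcs m1 n)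

/-- The core network `B(m)` of a ploidy profile whose terminal element is `mt`,
together with its leaf indexing (leaf `0` is `x₁ = 0`, leaf `i` is `x_{i+1}`). -/
def BLNet (mt : List ℕ) : LNet where
  net := BNet mt.headI mt.length
  leaf := fun i => if i = 0 then 0 else xBase mt.headI + (i + 1)

/-- The naive realization of the simple profile `(m₁, 1, …, 1)` on `n` taxa: a
directed path `0, 1, …, n + 2m₁ - 3` (with `v_j = j - 1`, `w_i = m₁ + i - 3`,
`v_j' = n + 2m₁ - 3 - j` and `x₁ = n + 2m₁ - 3`) together with the arcs
`(v_j, v_j')` and the pendant leaf arcs `(w_i, x_i)` with `x_i = n + 2m₁ + i`. -/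
def naiveNet (m1 n : ℕ) : Net :=
  mkNet (((List.range (n + 2*m1 - 3)).map fun p => (p, p+1)) ++
    ((List.range' 1 (m1 - 1)).map fun j => (j - 1, n + 2*m1 - 3 - j)) ++
    ((List.range' 2 (n - 1)).map fun i => (m1 + i - 3, n + 2*m1 + i)))

/-! ### Cherry modification operations -/

/-- `reduce(a,b)`: delete the leaf `b` of the cherry `{a,b}` together with its
incoming arc and suppress the resulting degree-two vertex (collapsing the network
to the single vertex `a` when the common parent is the root). -/
def ReduceOp (G G' : Net) : Prop :=
  ∃ a b p ea eb, a ≠ b ∧ IsLeafN G a ∧ IsLeafN G b ∧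
    ArcFT G ea p a ∧ ArcFT G eb p b ∧ ea ≠ eb ∧
    G'.verts = (G.verts.erase b).erase p ∧
    G'.arcs = (G.arcs.erase eb).erase ea ∧
    ((IsRootN G p ∧ ∀ e ∈ G'.arcs, G'.src e = G.src e ∧ G'.tgt e = G.tgt e) ∨
     (∃ ep q, ArcFT G ep q p ∧
        (∀ e ∈ G'.arcs, e ≠ ep → G'.src e = G.src e ∧ G'.tgt e = G.tgt e) ∧
        G'.src ep = q ∧ G'.tgt ep = a))

/-- `cut(a,b)`: delete the reticulation arc of the reticulate cherry `{a,b}` with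
reticulation leaf `b`, suppressing the two resulting degree-two vertices. -/
def CutOp (G G' : Net) : Prop :=
  ∃ a b pa pb e1 e2 e3 e4 e5 q r,
    a ≠ b ∧ IsLeafN G a ∧ IsLeafN G b ∧ IsReticN G pb ∧
    ArcFT G e1 pa a ∧ ArcFT G e2 pb b ∧ ArcFT G e3 pa pb ∧
    ArcFT G e4 q pb ∧ e3 ≠ e4 ∧ ArcFT G e5 r pa ∧
    G'.verts = (G.verts.erase pa).erase pb ∧
    G'.arcs = ((G.arcs.erase e3).erase e1).erase e2 ∧
    (∀ e ∈ G'.arcs, e ≠ e4 → e ≠ e5 → G'.src e = G.src e ∧ G'.tgt e = G.tgt e) ∧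
    G'.src e5 = r ∧ G'.tgt e5 = a ∧
    G'.src e4 = q ∧ G'.tgt e4 = b

/-- `simp(a)`: for a type-1 degenerate cherry `{a}` (sole leaf whose parent is the
reticulation vertex of a bead), delete one arc of the bead, suppressing the
resulting degree-two vertex and collapsing the outgoing arc of the tree vertex of
the bead. -/
def SimpOp (G G' : Net) : Prop :=
  ∃ a h u e1 e2 e3,
    IsLeafN G a ∧ (∀ w, IsLeafN G w → w = a) ∧ IsReticN G h ∧
    ArcFT G e1 u h ∧ ArcFT G e2 u h ∧ e1 ≠ e2 ∧ ArcFT G e3 h a ∧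
    ((IsRootN G u ∧ G'.verts = {a} ∧ G'.arcs = ∅) ∨
     (∃ eu q, ArcFT G eu q u ∧
        G'.verts = (G.verts.erase h).erase u ∧
        G'.arcs = ((G.arcs.erase e2).erase e3).erase e1 ∧
        (∀ e ∈ G'.arcs, e ≠ eu → G'.src e = G.src e ∧ G'.tgt e = G.tgt e) ∧
        G'.src eu = q ∧ G'.tgt eu = a))

/-- `trim(a)`: for a type-2 degenerate cherry `{a}` (sole leaf whose parent `p` is
a reticulation vertex with distinct parents `q₁, q₂`), delete the arc `(q₁,p)`
(case (a): there is a vertex `q` with arcs `(q,q₁)`, `(q,q₂)`, `(q₁,q₂)`),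
respectively one of the two parallel arcs from `q` to `q₂` (case (b): there is an
arc `(q₁,q)` and a pair of parallel arcs from `q` to `q₂`), suppressing the two
resulting degree-two vertices. -/
def TrimOp (G G' : Net) : Prop :=
  ∃ a p g0, IsLeafN G a ∧ (∀ w, IsLeafN G w → w = a) ∧ IsReticN G p ∧ ArcFT G g0 p a ∧
   ((∃ q q1 q2 f1 f2 f3 g1 g2,
      ArcFT G g1 q1 p ∧ ArcFT G g2 q2 p ∧ g1 ≠ g2 ∧ q1 ≠ q2 ∧
      ArcFT G f1 q q1 ∧ ArcFT G f2 q q2 ∧ ArcFT G f3 q1 q2 ∧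
      G'.verts = (G.verts.erase q1).erase p ∧
      G'.arcs = ((G.arcs.erase g1).erase f3).erase g0 ∧
      (∀ e ∈ G'.arcs, e ≠ f1 → e ≠ g2 → G'.src e = G.src e ∧ G'.tgt e = G.tgt e) ∧
      G'.src f1 = q ∧ G'.tgt f1 = q2 ∧
      G'.src g2 = q2 ∧ G'.tgt g2 = a) ∨
    (∃ q q1 q2 eq' f1 f2 g1 g2,
      ArcFT G g1 q1 p ∧ ArcFT G g2 q2 p ∧ g1 ≠ g2 ∧ q1 ≠ q2 ∧
      ArcFT G eq' q1 q ∧ ArcFT G f1 q q2 ∧ ArcFT G f2 q q2 ∧ f1 ≠ f2 ∧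
      G'.verts = (G.verts.erase q).erase q2 ∧
      G'.arcs = ((G.arcs.erase f2).erase f1).erase g2 ∧
      (∀ e ∈ G'.arcs, e ≠ eq' → G'.src e = G.src e ∧ G'.tgt e = G.tgt e) ∧
      G'.src eq' = q1 ∧ G'.tgt eq' = p))

/-- A single cherry modification operation: reduce, cut or simp. -/
def CherryModOp (G G' : Net) : Prop := ReduceOp G G' ∨ CutOp G G' ∨ SimpOp G G'

/-- A single weak cherry modification operation: reduce, cut, simp or trim. -/
def WeakCherryModOp (G G' : Net) : Prop := CherryModOp G G' ∨ TrimOp G G'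

/-- The network consisting of a single vertex (and no arcs). -/
def IsSingleV (G : Net) : Prop := ∃ v, G.verts = {v} ∧ G.arcs = ∅

/-- `G` admits a complete cherry modification sequence, i.e. `G` is an orchard. -/
def IsOrchardN (G : Net) : Prop :=
  ∃ G', Relation.ReflTransGen CherryModOp G G' ∧ IsSingleV G'

/-- `G` admits a complete weak cherry modification sequence, i.e. `G` is a weak
orchard. -/
def IsWeakOrchardN (G : Net) : Prop :=
  ∃ G', Relation.ReflTransGen WeakCherryModOp G G' ∧ IsSingleV G'

/-! ### The traceback through the simplification sequence -/

/-- Traceback step in case `α = 0`: replace the leaf indexing the first component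
of `m''` by a cherry on two new leaves. -/
def CherryExpandOp (R'' R' : LNet) : Prop :=
  ∃ y1 y2 b1 b2,
    y1 ∉ R''.net.verts ∧ y2 ∉ R''.net.verts ∧ y1 ≠ y2 ∧
    b1 ∉ R''.net.arcs ∧ b2 ∉ R''.net.arcs ∧ b1 ≠ b2 ∧
    R'.net.verts = R''.net.verts ∪ {y1, y2} ∧
    R'.net.arcs = R''.net.arcs ∪ {b1, b2} ∧
    (∀ a ∈ R''.net.arcs, R'.net.src a = R''.net.src a ∧ R'.net.tgt a = R''.net.tgt a) ∧
    R'.net.src b1 = R''.leaf 0 ∧ R'.net.tgt b1 = y1 ∧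
    R'.net.src b2 = R''.leaf 0 ∧ R'.net.tgt b2 = y2 ∧
    R'.leaf 0 = y1 ∧ R'.leaf 1 = y2 ∧ (∀ i, 1 ≤ i → R'.leaf (i + 1) = R''.leaf i)

/-- Traceback step in case `α > m₂'`: subdivide the incoming arcs of the leaves
indexing the first and second components of `m''` by new vertices `u` and `v` and
add the arc `(v,u)`. -/
def AddArcOp (R'' R' : LNet) : Prop :=
  ∃ u v a0 a1 b0 b1 c,
    u ∉ R''.net.verts ∧ v ∉ R''.net.verts ∧ u ≠ v ∧
    a0 ∈ R''.net.arcs ∧ R''.net.tgt a0 = R''.leaf 0 ∧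
    a1 ∈ R''.net.arcs ∧ R''.net.tgt a1 = R''.leaf 1 ∧ a0 ≠ a1 ∧
    b0 ∉ R''.net.arcs ∧ b1 ∉ R''.net.arcs ∧ c ∉ R''.net.arcs ∧
    b0 ≠ b1 ∧ b0 ≠ c ∧ b1 ≠ c ∧
    R'.net.verts = R''.net.verts ∪ {u, v} ∧
    R'.net.arcs = R''.net.arcs ∪ {b0, b1, c} ∧
    (∀ a ∈ R''.net.arcs, a ≠ a0 → a ≠ a1 →
        R'.net.src a = R''.net.src a ∧ R'.net.tgt a = R''.net.tgt a) ∧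
    R'.net.src a0 = R''.net.src a0 ∧ R'.net.tgt a0 = u ∧
    R'.net.src a1 = R''.net.src a1 ∧ R'.net.tgt a1 = v ∧
    R'.net.src b0 = u ∧ R'.net.tgt b0 = R''.leaf 0 ∧
    R'.net.src b1 = v ∧ R'.net.tgt b1 = R''.leaf 1 ∧
    R'.net.src c = v ∧ R'.net.tgt c = u ∧
    (∀ i, R'.leaf i = R''.leaf i)

/-- Traceback step in case `0 < α ≤ m₂'`, where the inserted component `α` sits at
(0-based) position `j` of `m''`: subdivide the incoming arc of the leaf indexing
`α` by a vertex `v`, replace the leaf indexing the first component of `m''` by a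
cherry, subdivide the incoming arc of one of the two new cherry leaves by a vertex
`u`, add the arc `(v,u)` and delete the leaf indexing `α` together with its
incoming arc, suppressing the resulting degree-two vertex. -/
def InsertBackOp (j : ℕ) (R'' R' : LNet) : Prop :=
  ∃ u y1 y2 c1 c2 c3 az,
    u ∉ R''.net.verts ∧ y1 ∉ R''.net.verts ∧ y2 ∉ R''.net.verts ∧
    u ≠ y1 ∧ u ≠ y2 ∧ y1 ≠ y2 ∧
    c1 ∉ R''.net.arcs ∧ c2 ∉ R''.net.arcs ∧ c3 ∉ R''.net.arcs ∧
    c1 ≠ c2 ∧ c1 ≠ c3 ∧ c2 ≠ c3 ∧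
    az ∈ R''.net.arcs ∧ R''.net.tgt az = R''.leaf j ∧
    R'.net.verts = (R''.net.verts.erase (R''.leaf j)) ∪ {u, y1, y2} ∧
    R'.net.arcs = R''.net.arcs ∪ {c1, c2, c3} ∧
    (∀ a ∈ R''.net.arcs, a ≠ az →
        R'.net.src a = R''.net.src a ∧ R'.net.tgt a = R''.net.tgt a) ∧
    R'.net.src az = R''.net.src az ∧ R'.net.tgt az = u ∧
    R'.net.src c1 = R''.leaf 0 ∧ R'.net.tgt c1 = u ∧
    R'.net.src c2 = u ∧ R'.net.tgt c2 = y1 ∧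
    R'.net.src c3 = R''.leaf 0 ∧ R'.net.tgt c3 = y2 ∧
    R'.leaf 0 = y1 ∧ R'.leaf 1 = y2 ∧
    (∀ i, 1 ≤ i → i < j → R'.leaf (i + 1) = R''.leaf i) ∧
    (∀ i, j < i → R'.leaf i = R''.leaf i)

/-- One step of the traceback: `R'` is a realization of the non-simple profile `m'`
obtained from the realization `R''` of `simpStep m'` by the surgery dictated by the
case (`α = 0`, `α > m₂'` or `0 < α ≤ m₂'`) that produced `simpStep m'` from `m'`. -/
def TraceStep (m' : List ℕ) (R'' R' : LNet) : Prop :=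
  2 ≤ m'.length ∧ ¬ IsSimpleP m' ∧
  ((m'.headI = m'.tail.headI ∧ CherryExpandOp R'' R') ∨
   (m'.tail.headI < m'.headI - m'.tail.headI ∧ AddArcOp R'' R') ∨
   (0 < m'.headI - m'.tail.headI ∧ m'.headI - m'.tail.headI ≤ m'.tail.headI ∧
     InsertBackOp
       ((m'.tail.takeWhile fun y => decide (m'.headI - m'.tail.headI ≤ y)).length)
       R'' R'))

/-- `TracebackFrom core m N`: `N` is a network `N(m)` obtainable by the traceback
through the simplification sequence of `m`, initialized with the core network
`core`. -/
inductive TracebackFrom (core : LNet) : List ℕ → LNet → Prop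
  | base (m : List ℕ) : IsSimpleP m → TracebackFrom core m core
  | step (m' : List ℕ) (R'' R' : LNet) :
      TracebackFrom core (simpStep m') R'' → TraceStep m' R'' R' →
      TracebackFrom core m' R'

/-! ### Tree-based and tree-child networks -/

def subIn (G : Net) (A : Finset ℕ) (v : ℕ) : ℕ := (A.filter fun a => G.tgt a = v).card
def subOut (G : Net) (A : Finset ℕ) (v : ℕ) : ℕ := (A.filter fun a => G.src a = v).card

/-- `G` is tree-based: some subset `A` of its arcs forms a spanning subdivision of a
rooted phylogenetic tree (with one extra incoming arc added to its root) whose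
leaves are exactly the leaves of `G`; all remaining arcs of `G` join subdivision
vertices, and every subdivision vertex has total degree 3 in `G`. -/
def IsTreeBased (G : Net) : Prop :=
  ∃ A : Finset ℕ, A ⊆ G.arcs ∧
    (∃! r, r ∈ G.verts ∧ subIn G A r = 0) ∧
    (∀ r ∈ G.verts, subIn G A r = 0 → subOut G A r = 1) ∧
    (∀ v ∈ G.verts,
        (subIn G A v = 0 ∧ subOut G A v = 1) ∨ (subIn G A v = 1 ∧ subOut G A v = 0) ∨
        (subIn G A v = 1 ∧ subOut G A v = 1) ∨ (subIn G A v = 1 ∧ subOut G A v = 2)) ∧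
    (∀ v ∈ G.verts, subIn G A v = 1 → subOut G A v = 0 → IsLeafN G v) ∧
    (∀ v, IsLeafN G v → subIn G A v = 1 ∧ subOut G A v = 0) ∧
    (∀ a ∈ G.arcs, a ∉ A →
        subIn G A (G.src a) = 1 ∧ subOut G A (G.src a) = 1 ∧
        subIn G A (G.tgt a) = 1 ∧ subOut G A (G.tgt a) = 1) ∧
    (∀ v ∈ G.verts, subIn G A v = 1 → subOut G A v = 1 → inDeg G v + outDeg G v = 3)

/-- `G` is tree-child (reticulation vertices contained in beads being ignored):
every vertex has a directed path to a leaf on which every vertex except possibly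
the first one is either not a reticulation vertex or is contained in a bead. -/
def IsTreeChild (G : Net) : Prop :=
  ∀ v ∈ G.verts, ∃ (l : List ℕ) (w : ℕ), IsWalk G l v w ∧ IsLeafN G w ∧
    ∀ a ∈ l, IsReticN G (G.tgt a) → InBead G (G.tgt a)

/-! ### Multiple-labelled networks and the split operation -/

/-- A multiple-labelled network: a network together with a labelling map assigning
to each leaf vertex the (0-based) position of the profile component it is labelled
with; distinct leaves may carry the same label. -/
structure MLNet where
  net : Net
  lab : ℕ → ℕ

/-- A multiple-labelled tree: a multiple-labelled network without reticulation
vertices. -/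
def IsMLTree (R : MLNet) : Prop := ∀ v, ¬ IsReticN R.net v

/-- The multiple-labelled network `R` realizes the ploidy profile `m`: for every
position `i` of `m`, the total number of directed paths from the root to leaves
labelled `i` equals the `i`-th component of `m`. -/
def MLRealizes (R : MLNet) (m : List ℕ) : Prop :=
  IsPhylo R.net ∧
  (∀ v, IsLeafN R.net v → R.lab v < m.length) ∧
  (∀ i < m.length, ∀ r, IsRootN R.net r →
      (∑ v ∈ R.net.verts.filter (fun v => IsLeafN R.net v ∧ R.lab v = i),
          nPaths R.net r v) = m.getD i 0)

/-- The arcs of the subgraph induced by the vertices below `c`. -/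
def arcsBelow (G : Net) (c : ℕ) : Set ℕ :=
  {b | b ∈ G.arcs ∧ BelowV G c (G.src b) ∧ BelowV G c (G.tgt b)}

/-- `a` is a cut-arc of `G`: removing it disconnects its end vertices in the
underlying undirected graph. -/
def IsCutArc (G : Net) (a : ℕ) : Prop :=
  a ∈ G.arcs ∧
    ¬ Relation.ReflTransGen
        (fun x y => ∃ b ∈ G.arcs, b ≠ a ∧
          ((G.src b = x ∧ G.tgt b = y) ∨ (G.src b = y ∧ G.tgt b = x)))
        (G.src a) (G.tgt a)

/-- The split operation: `R'` is obtained from `R` by deleting a reticulation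
vertex `h` (with parents `p₁, p₂` and child `c`, where `(h,c)` is a cut-arc)
together with its three incident arcs, making a disjoint copy (via `φ` on vertices
and `ψ` on arcs) of the subgraph induced by the vertices below `c`, and attaching
one copy of `c` to `p₁` by an arc `(p₁,c)` and the other to `p₂` by an arc
`(p₂,c)`. -/
def SplitRel (R R' : MLNet) : Prop :=
  ∃ (h p1 p2 c a0 a1 a2 : ℕ) (φ ψ : ℕ → ℕ),
    IsReticN R.net h ∧
    ArcFT R.net a0 h c ∧ IsCutArc R.net a0 ∧
    ArcFT R.net a1 p1 h ∧ ArcFT R.net a2 p2 h ∧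
    a1 ≠ a2 ∧ a0 ≠ a1 ∧ a0 ≠ a2 ∧
    Set.InjOn φ {w | BelowV R.net c w} ∧
    (∀ w, BelowV R.net c w → φ w ∉ R.net.verts) ∧
    Set.InjOn ψ (arcsBelow R.net c) ∧
    (∀ b ∈ arcsBelow R.net c, ψ b ∉ R.net.arcs) ∧
    (↑R'.net.verts : Set ℕ) =
      ((↑R.net.verts : Set ℕ) \ {h}) ∪ (φ '' {w | BelowV R.net c w}) ∧
    (↑R'.net.arcs : Set ℕ) =
      ((↑R.net.arcs : Set ℕ) \ {a0}) ∪ (ψ '' arcsBelow R.net c) ∧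
    (∀ b ∈ R.net.arcs, b ≠ a0 → b ≠ a1 → b ≠ a2 →
        R'.net.src b = R.net.src b ∧ R'.net.tgt b = R.net.tgt b) ∧
    R'.net.src a1 = p1 ∧ R'.net.tgt a1 = c ∧
    R'.net.src a2 = p2 ∧ R'.net.tgt a2 = φ c ∧
    (∀ b ∈ arcsBelow R.net c,
        R'.net.src (ψ b) = φ (R.net.src b) ∧ R'.net.tgt (ψ b) = φ (R.net.tgt b)) ∧
    (∀ v ∈ R.net.verts, v ≠ h → R'.lab v = R.lab v) ∧
    (∀ w, BelowV R.net c w → R'.lab (φ w) = R.lab w)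

/-- Adjacency in ploidy profile space `𝒫(m)` (relative to an edit distance `D` on
multiple-labelled trees): both endpoints realize `m` and either one is obtained
from the other by a single split operation, or both are multiple-labelled trees at
`D`-distance 1. -/
def PEdge (m : List ℕ) (D : MLNet → MLNet → ℕ) (A B : MLNet) : Prop :=
  MLRealizes A m ∧ MLRealizes B m ∧
    (SplitRel A B ∨ SplitRel B A ∨ (IsMLTree A ∧ IsMLTree B ∧ D A B = 1))
section Walks

variable {G : Net}

theorem isWalk_append {l₁ l₂ : List ℕ} {u v w : ℕ} (h₁ : IsWalk G l₁ u v)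
    (h₂ : IsWalk G l₂ v w) : IsWalk G (l₁ ++ l₂) u w := by
  induction l₁ generalizing u with
  | nil => obtain ⟨rfl, -⟩ := h₁; simpa
  | cons a t ih => obtain ⟨ha, hs, ht⟩ := h₁; exact ⟨ha, hs, ih ht⟩

theorem isWalk_start_mem (hG : ∀ a ∈ G.arcs, G.src a ∈ G.verts) {l : List ℕ} {u v : ℕ}
    (h : IsWalk G l u v) : u ∈ G.verts := by
  cases l with
  | nil => exact h.2
  | cons a t => obtain ⟨ha, hs, -⟩ := h; exact hs ▸ hG a ha

theorem isWalk_end_mem {l : List ℕ} {u v : ℕ} (h : IsWalk G l u v) : v ∈ G.verts := by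
  induction l generalizing u with
  | nil => exact h.1 ▸ h.2
  | cons a t ih => exact ih h.2.2

theorem isWalk_append_inv (hG : ∀ a ∈ G.arcs, G.src a ∈ G.verts) {l₁ l₂ : List ℕ} {u w : ℕ}
    (h : IsWalk G (l₁ ++ l₂) u w) : ∃ v, IsWalk G l₁ u v ∧ IsWalk G l₂ v w := by
  induction l₁ generalizing u with
  | nil => exact ⟨u, ⟨rfl, isWalk_start_mem hG h⟩, h⟩
  | cons a t ih =>
    obtain ⟨ha, hs, ht⟩ := h
    obtain ⟨v, hv1, hv2⟩ := ih ht
    exact ⟨v, ⟨ha, hs, hv1⟩, hv2⟩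

theorem isWalk_end_unique {l : List ℕ} {u v v' : ℕ} (h : IsWalk G l u v)
    (h' : IsWalk G l u v') : v = v' := by
  induction l generalizing u with
  | nil => exact h.1.symm.trans h'.1
  | cons a t ih => exact ih h.2.2 h'.2.2

theorem isWalk_arcs_mem {l : List ℕ} {u v : ℕ} (h : IsWalk G l u v) :
    ∀ a ∈ l, a ∈ G.arcs := by
  induction l generalizing u with
  | nil => simp
  | cons a t ih =>
    intro b hb
    rcases List.mem_cons.mp hb with rfl | hb
    · exact h.1
    · exact ih h.2.2 b hb

theorem isWalk_nodup (hG : IsPhylo G) {l : List ℕ} {u v : ℕ} (h : IsWalk G l u v) :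
    l.Nodup := by
  induction l generalizing u with
  | nil => simp
  | cons a t ih =>
    obtain ⟨ha, hs, ht⟩ := h
    refine List.nodup_cons.2 ⟨?_, ih ht⟩
    intro hmem
    obtain ⟨s, t', rfl⟩ := List.append_of_mem hmem
    obtain ⟨x, hx1, hx2⟩ := isWalk_append_inv hG.src_mem ht
    obtain ⟨-, hsx, -⟩ := hx2
    exact hG.acyclic (G.src a) (a :: s) (by simp) ⟨ha, rfl, hsx ▸ hx1⟩

theorem finite_lists (s : Finset ℕ) (n : ℕ) :
    {l : List ℕ | l.length ≤ n ∧ ∀ x ∈ l, x ∈ s}.Finite := by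
  induction n with
  | zero =>
    refine Set.Finite.subset (Set.finite_singleton []) ?_
    rintro l ⟨hl, -⟩
    simpa using List.length_eq_zero_iff.mp (Nat.le_zero.mp hl)
  | succ n ih =>
    refine Set.Finite.subset (((s.finite_toSet.prod ih).image fun p => p.1 :: p.2).insert []) ?_
    rintro (_ | ⟨x, t⟩) ⟨hl, hmem⟩
    · simp
    · refine Set.mem_insert_of_mem _ ⟨(x, t), ⟨hmem x (by simp), ?_, fun y hy => hmem y (by simp [hy])⟩, rfl⟩
      show t.length ≤ n; simp only [List.length_cons] at hl; omega

theorem finite_walks (hG : IsPhylo G) (u v : ℕ) : {l : List ℕ | IsWalk G l u v}.Finite := by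
  refine Set.Finite.subset (finite_lists G.arcs G.arcs.card) ?_
  intro l hl
  have hn := isWalk_nodup hG hl
  have hm := isWalk_arcs_mem hl
  refine ⟨?_, hm⟩
  have hsub : l.toFinset ⊆ G.arcs := fun x hx => hm x (List.mem_toFinset.mp hx)
  calc l.length = l.toFinset.card := (List.toFinset_card_of_nodup hn).symm
    _ ≤ _ := Finset.card_le_card hsub

theorem append_cons_inj {x : ℕ} : ∀ {l₁ l₁' l₂ l₂' : List ℕ}, x ∉ l₁ → x ∉ l₁' →
    l₁ ++ x :: l₂ = l₁' ++ x :: l₂' → l₁ = l₁' ∧ l₂ = l₂' := by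
  intro l₁
  induction l₁ with
  | nil =>
    intro l₁' l₂ l₂' h1 h1' heq
    cases l₁' with
    | nil => simpa using heq
    | cons y t =>
      simp only [List.nil_append, List.cons_append, List.cons.injEq] at heq
      exact absurd (heq.1 ▸ List.mem_cons_self (a := y) (l := t)) h1'
  | cons y t ih =>
    intro l₁' l₂ l₂' h1 h1' heq
    cases l₁' with
    | nil =>
      simp only [List.nil_append, List.cons_append, List.cons.injEq] at heq
      exact absurd (heq.1 ▸ List.mem_cons_self (a := y) (l := t)) (heq.1 ▸ h1)
    | cons y' t' =>
      simp only [List.cons_append, List.cons.injEq] at heq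
      obtain ⟨h2, h3⟩ := ih (fun hh => h1 (List.mem_cons_of_mem _ hh))
        (fun hh => h1' (List.mem_cons_of_mem _ hh)) heq.2
      exact ⟨by rw [heq.1, h2], h3⟩

end Walks
open Classical in
noncomputable def reticCard (G : Net) : ℕ := (G.verts.filter fun v => IsReticN G v).card

theorem below_trans {G : Net} {u v w : ℕ} (h1 : BelowV G u v) (h2 : BelowV G v w) :
    BelowV G u w := by
  obtain ⟨l1, h1⟩ := h1; obtain ⟨l2, h2⟩ := h2; exact ⟨l1 ++ l2, isWalk_append h1 h2⟩

theorem below_mem {G : Net} {u w : ℕ} (h : BelowV G u w) : w ∈ G.verts := by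
  obtain ⟨l, hl⟩ := h; exact isWalk_end_mem hl

structure Cfg where
  G : Net
  phylo : IsPhylo G
  h : ℕ
  a0 : ℕ
  a1 : ℕ
  a2 : ℕ
  hret : IsReticN G h
  ha0 : a0 ∈ G.arcs
  hsa0 : G.src a0 = h
  ha1 : a1 ∈ G.arcs
  hta1 : G.tgt a1 = h
  ha2 : a2 ∈ G.arcs
  hta2 : G.tgt a2 = h
  hne12 : a1 ≠ a2
  hlow : ∀ w, BelowV G (G.tgt a0) w → ¬ IsReticN G w

namespace Cfg
variable (C : Cfg)

def c : ℕ := C.G.tgt C.a0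
def p1 : ℕ := C.G.src C.a1
def p2 : ℕ := C.G.src C.a2
def V : ℕ := C.G.verts.sup id + 1
def A : ℕ := C.G.arcs.sup id + 1

open Classical in
noncomputable def belowF : Finset ℕ := C.G.verts.filter fun w => BelowV C.G C.c w
open Classical in
noncomputable def abF : Finset ℕ :=
  C.G.arcs.filter fun b => BelowV C.G C.c (C.G.src b) ∧ BelowV C.G C.c (C.G.tgt b)

noncomputable def G' : Net where
  verts := (C.G.verts.erase C.h) ∪ C.belowF.image (· + C.V)
  arcs := (C.G.arcs.erase C.a0) ∪ C.abF.image (· + C.A)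
  src := fun b => if C.A ≤ b then C.G.src (b - C.A) + C.V else C.G.src b
  tgt := fun b => if C.A ≤ b then C.G.tgt (b - C.A) + C.V
    else if b = C.a1 then C.c else if b = C.a2 then C.c + C.V else C.G.tgt b

theorem V_pos : 0 < C.V := Nat.succ_pos _

theorem A_pos : 0 < C.A := Nat.succ_pos _

theorem lt_V {v : ℕ} (hv : v ∈ C.G.verts) : v < C.V :=
  Nat.lt_succ_of_le (Finset.le_sup (f := id) hv)

theorem lt_A {b : ℕ} (hb : b ∈ C.G.arcs) : b < C.A :=
  Nat.lt_succ_of_le (Finset.le_sup (f := id) hb)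

theorem c_mem : C.c ∈ C.G.verts := C.phylo.tgt_mem _ C.ha0

theorem c_ne_h : C.c ≠ C.h := fun hh => C.phylo.no_loop _ C.ha0 (C.hsa0.trans hh.symm)

theorem src_eq_h {b : ℕ} (hb : b ∈ C.G.arcs) (hs : C.G.src b = C.h) : b = C.a0 := by
  have hcard : (C.G.arcs.filter fun a => C.G.src a = C.h).card = 1 := C.hret.2.2
  obtain ⟨x, hx⟩ := Finset.card_eq_one.mp hcard
  have h1 : b ∈ C.G.arcs.filter fun a => C.G.src a = C.h := Finset.mem_filter.2 ⟨hb, hs⟩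
  have h2 : C.a0 ∈ C.G.arcs.filter fun a => C.G.src a = C.h := Finset.mem_filter.2 ⟨C.ha0, C.hsa0⟩
  rw [hx] at h1 h2
  exact (Finset.mem_singleton.mp h1).trans (Finset.mem_singleton.mp h2).symm

theorem tgt_eq_h {b : ℕ} (hb : b ∈ C.G.arcs) (ht : C.G.tgt b = C.h) : b = C.a1 ∨ b = C.a2 := by
  have hsub : ({C.a1, C.a2} : Finset ℕ) ⊆ C.G.arcs.filter fun a => C.G.tgt a = C.h := by
    intro x hx
    rcases Finset.mem_insert.mp hx with rfl | hx
    · exact Finset.mem_filter.2 ⟨C.ha1, C.hta1⟩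
    · rw [Finset.mem_singleton.mp hx]; exact Finset.mem_filter.2 ⟨C.ha2, C.hta2⟩
  have hcard : (C.G.arcs.filter fun a => C.G.tgt a = C.h).card = 2 := C.hret.2.1
  have : C.G.arcs.filter (fun a => C.G.tgt a = C.h) = {C.a1, C.a2} :=
    (Finset.eq_of_subset_of_card_le hsub (by rw [hcard, Finset.card_insert_of_notMem (by simpa using C.hne12), Finset.card_singleton])).symm
  have hbmem : b ∈ ({C.a1, C.a2} : Finset ℕ) := this ▸ Finset.mem_filter.2 ⟨hb, ht⟩
  simpa using hbmem

theorem c_below : BelowV C.G C.c C.c := ⟨[], rfl, C.c_mem⟩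

theorem h_not_below : ¬ BelowV C.G C.c C.h := by
  rintro ⟨l, hl⟩
  exact C.phylo.acyclic C.h (C.a0 :: l) (by simp) ⟨C.ha0, C.hsa0, hl⟩

theorem below_step {b : ℕ} (hb : b ∈ C.G.arcs) (hs : BelowV C.G C.c (C.G.src b)) :
    BelowV C.G C.c (C.G.tgt b) :=
  below_trans hs ⟨[b], hb, rfl, rfl, C.phylo.tgt_mem _ hb⟩

theorem below_entry {w : ℕ} (hw : BelowV C.G C.c w) (hwc : w ≠ C.c) :
    ∃ b ∈ C.G.arcs, C.G.tgt b = w ∧ BelowV C.G C.c (C.G.src b) := by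
  obtain ⟨l, hl⟩ := hw
  rcases List.eq_nil_or_concat l with rfl | ⟨L, b, rfl⟩
  · exact absurd hl.1.symm hwc
  · rw [List.concat_eq_append] at hl
    obtain ⟨x, hx1, hx2⟩ := isWalk_append_inv C.phylo.src_mem hl
    obtain ⟨hb, hsb, htb, -⟩ := hx2
    exact ⟨b, hb, htb, hsb ▸ ⟨L, hx1⟩⟩

theorem below_indeg {w : ℕ} (hw : BelowV C.G C.c w) : inDeg C.G w = 1 := by
  have hmem : w ∈ C.G.verts := below_mem hw
  have hin : ∃ b ∈ C.G.arcs, C.G.tgt b = w := by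
    by_cases hwc : w = C.c
    · exact ⟨C.a0, C.ha0, hwc ▸ rfl⟩
    · obtain ⟨b, hb, htb, -⟩ := C.below_entry hw hwc
      exact ⟨b, hb, htb⟩
  have hpos : 0 < inDeg C.G w := by
    obtain ⟨b, hb, htb⟩ := hin
    exact Finset.card_pos.2 ⟨b, Finset.mem_filter.2 ⟨hb, htb⟩⟩
  rcases C.phylo.types w hmem with hr | hl | ht | hret
  · rw [hr.2] at hpos; omega
  · exact hl.2.1
  · exact ht.2.1
  · exact absurd hret (C.hlow w hw)

theorem indeg_unique {w b b' : ℕ} (hd : inDeg C.G w = 1) (hb : b ∈ C.G.arcs)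
    (hb' : b' ∈ C.G.arcs) (ht : C.G.tgt b = w) (ht' : C.G.tgt b' = w) : b = b' := by
  have h1 : b ∈ C.G.arcs.filter fun a => C.G.tgt a = w := Finset.mem_filter.2 ⟨hb, ht⟩
  have h2 : b' ∈ C.G.arcs.filter fun a => C.G.tgt a = w := Finset.mem_filter.2 ⟨hb', ht'⟩
  exact Finset.card_le_one.mp (le_of_eq hd) _ h1 _ h2

theorem tgt_eq_c {b : ℕ} (hb : b ∈ C.G.arcs) (ht : C.G.tgt b = C.c) : b = C.a0 :=
  C.indeg_unique (C.below_indeg C.c_below) hb C.ha0 ht rfl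

theorem below_closed_rev {b : ℕ} (hb : b ∈ C.G.arcs) (ht : BelowV C.G C.c (C.G.tgt b))
    (htc : C.G.tgt b ≠ C.c) : BelowV C.G C.c (C.G.src b) := by
  obtain ⟨b', hb', htb', hsb'⟩ := C.below_entry ht htc
  rwa [C.indeg_unique (C.below_indeg ht) hb hb' rfl htb']

theorem p1_not_below : ¬ BelowV C.G C.c C.p1 := fun hh =>
  C.h_not_below (C.hta1 ▸ C.below_step C.ha1 hh)

theorem p2_not_below : ¬ BelowV C.G C.c C.p2 := fun hh =>
  C.h_not_below (C.hta2 ▸ C.below_step C.ha2 hh)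

theorem p1_ne_h : C.p1 ≠ C.h := fun hh => C.phylo.no_loop _ C.ha1 (hh.trans C.hta1.symm)

theorem p2_ne_h : C.p2 ≠ C.h := fun hh => C.phylo.no_loop _ C.ha2 (hh.trans C.hta2.symm)

theorem a1_ne_a0 : C.a1 ≠ C.a0 := by
  intro hh
  have : C.G.tgt C.a0 = C.h := hh ▸ C.hta1
  exact C.c_ne_h this

theorem a2_ne_a0 : C.a2 ≠ C.a0 := by
  intro hh
  have : C.G.tgt C.a0 = C.h := hh ▸ C.hta2
  exact C.c_ne_h this

end Cfg
namespace Cfg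
variable (C : Cfg)

theorem stayS {l : List ℕ} {u w : ℕ} (hl : IsWalk C.G l u w) (hu : BelowV C.G C.c u) :
    BelowV C.G C.c w := below_trans hu ⟨l, hl⟩

theorem srcs_below {l : List ℕ} {u w : ℕ} (hl : IsWalk C.G l u w) (hu : BelowV C.G C.c u) :
    ∀ b ∈ l, BelowV C.G C.c (C.G.src b) := by
  induction l generalizing u with
  | nil => simp
  | cons b t ih =>
    obtain ⟨hb, hs, ht⟩ := hl
    intro x hx
    rcases List.mem_cons.mp hx with rfl | hx
    · exact hs ▸ hu
    · exact ih ht (C.below_step hb (hs ▸ hu)) x hx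

theorem decompS {l : List ℕ} {u w : ℕ} (hl : IsWalk C.G l u w) (hu : ¬ BelowV C.G C.c u)
    (hw : BelowV C.G C.c w) :
    ∃ l₁ l₂, l = l₁ ++ C.a0 :: l₂ ∧ IsWalk C.G l₁ u C.h ∧ IsWalk C.G l₂ C.c w ∧
      (∀ b ∈ l₁, b ≠ C.a0 ∧ ¬ BelowV C.G C.c (C.G.src b)) ∧
      (∀ b ∈ l₂, BelowV C.G C.c (C.G.src b)) := by
  induction l generalizing u with
  | nil => exact absurd (hl.1 ▸ hw) hu
  | cons b t ih =>
    obtain ⟨hb, hs, ht⟩ := hl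
    by_cases hbS : BelowV C.G C.c (C.G.tgt b)
    · have hbc : C.G.tgt b = C.c := by
        by_contra hne
        exact hu (hs ▸ C.below_closed_rev hb hbS hne)
      have hba0 : b = C.a0 := C.tgt_eq_c hb hbc
      subst hba0
      refine ⟨[], t, by simp, ⟨hs.symm.trans C.hsa0, hs ▸ C.phylo.src_mem _ hb⟩, hbc ▸ ht, by simp, ?_⟩
      exact C.srcs_below (hbc ▸ ht) C.c_below
    · obtain ⟨l₁, l₂, heq, hw1, hw2, hp1, hp2⟩ := ih ht hbS
      refine ⟨b :: l₁, l₂, by rw [heq]; rfl, ⟨hb, hs, hw1⟩, hw2, ?_, hp2⟩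
      intro x hx
      rcases List.mem_cons.mp hx with rfl | hx
      · refine ⟨fun hxa => ?_, hs ▸ hu⟩
        subst hxa
        exact hbS C.c_below
      · exact hp1 x hx

theorem no_a0_of_not_below {l : List ℕ} {u w : ℕ} (hl : IsWalk C.G l u w)
    (hw : ¬ BelowV C.G C.c w) : ∀ b ∈ l, b ≠ C.a0 := by
  intro b hb hba0
  subst hba0
  obtain ⟨s, t, rfl⟩ := List.append_of_mem hb
  obtain ⟨x, hx1, hx2⟩ := isWalk_append_inv C.phylo.src_mem hl
  obtain ⟨-, -, hwt⟩ := hx2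
  exact hw (C.stayS hwt C.c_below)

theorem no_a12 {l : List ℕ} {u w : ℕ} (hl : IsWalk C.G l u w) (hw : w ≠ C.h)
    (h0 : ∀ b ∈ l, b ≠ C.a0) : ∀ b ∈ l, b ≠ C.a1 ∧ b ≠ C.a2 := by
  induction l generalizing u with
  | nil => simp
  | cons b t ih =>
    obtain ⟨hb, hs, ht⟩ := hl
    have hkey : C.G.tgt b ≠ C.h := by
      intro hth
      cases t with
      | nil => exact hw (ht.1 ▸ hth)
      | cons b' t' =>
        obtain ⟨hb', hs', -⟩ := ht
        have : b' = C.a0 := C.src_eq_h hb' (hs'.trans hth)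
        exact h0 b' (by simp) this
    intro x hx
    rcases List.mem_cons.mp hx with rfl | hx
    · exact ⟨fun hh => hkey (hh ▸ C.hta1), fun hh => hkey (hh ▸ C.hta2)⟩
    · exact ih ht (fun y hy => h0 y (List.mem_cons_of_mem _ hy)) x hx

end Cfg
namespace Cfg
variable (C : Cfg)

theorem mem_arcs' {b : ℕ} : b ∈ C.G'.arcs ↔
    (b ∈ C.G.arcs ∧ b ≠ C.a0) ∨
    (∃ b0, (b0 ∈ C.G.arcs ∧ BelowV C.G C.c (C.G.src b0) ∧ BelowV C.G C.c (C.G.tgt b0)) ∧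
      b = b0 + C.A) := by
  show b ∈ (C.G.arcs.erase C.a0) ∪ C.abF.image (· + C.A) ↔ _
  simp only [Finset.mem_union, Finset.mem_erase, Finset.mem_image, abF, Finset.mem_filter]
  constructor
  · rintro (⟨h1, h2⟩ | ⟨b0, hb0, rfl⟩)
    · exact Or.inl ⟨h2, h1⟩
    · exact Or.inr ⟨b0, hb0, rfl⟩
  · rintro (⟨h1, h2⟩ | ⟨b0, hb0, rfl⟩)
    · exact Or.inl ⟨h2, h1⟩
    · exact Or.inr ⟨b0, hb0, rfl⟩

theorem mem_verts' {v : ℕ} : v ∈ C.G'.verts ↔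
    (v ∈ C.G.verts ∧ v ≠ C.h) ∨ (∃ w, BelowV C.G C.c w ∧ v = w + C.V) := by
  show v ∈ (C.G.verts.erase C.h) ∪ C.belowF.image (· + C.V) ↔ _
  simp only [Finset.mem_union, Finset.mem_erase, Finset.mem_image, belowF, Finset.mem_filter]
  constructor
  · rintro (⟨h1, h2⟩ | ⟨w, hw, rfl⟩)
    · exact Or.inl ⟨h2, h1⟩
    · exact Or.inr ⟨w, hw.2, rfl⟩
  · rintro (⟨h1, h2⟩ | ⟨w, hw, rfl⟩)
    · exact Or.inl ⟨h2, h1⟩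
    · exact Or.inr ⟨w, ⟨below_mem hw, hw⟩, rfl⟩

theorem src'_orig {b : ℕ} (hb : b ∈ C.G.arcs) : C.G'.src b = C.G.src b :=
  if_neg (not_le.2 (C.lt_A hb))

theorem tgt'_orig {b : ℕ} (hb : b ∈ C.G.arcs) (h1 : b ≠ C.a1) (h2 : b ≠ C.a2) :
    C.G'.tgt b = C.G.tgt b := by
  show (if C.A ≤ b then _ else if b = C.a1 then _ else if b = C.a2 then _ else C.G.tgt b) = _
  rw [if_neg (not_le.2 (C.lt_A hb)), if_neg h1, if_neg h2]

theorem tgt'_a1 : C.G'.tgt C.a1 = C.c := by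
  show (if C.A ≤ C.a1 then _ else if C.a1 = C.a1 then _ else _) = _
  rw [if_neg (not_le.2 (C.lt_A C.ha1)), if_pos rfl]

theorem tgt'_a2 : C.G'.tgt C.a2 = C.c + C.V := by
  show (if C.A ≤ C.a2 then _ else if C.a2 = C.a1 then _ else if C.a2 = C.a2 then _ else _) = _
  rw [if_neg (not_le.2 (C.lt_A C.ha2)), if_neg (Ne.symm C.hne12), if_pos rfl]

theorem src'_shift {b : ℕ} : C.G'.src (b + C.A) = C.G.src b + C.V := by
  show (if C.A ≤ b + C.A then C.G.src (b + C.A - C.A) + C.V else _) = _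
  rw [if_pos (Nat.le_add_left _ _), Nat.add_sub_cancel]

theorem tgt'_shift {b : ℕ} : C.G'.tgt (b + C.A) = C.G.tgt b + C.V := by
  show (if C.A ≤ b + C.A then C.G.tgt (b + C.A - C.A) + C.V else _) = _
  rw [if_pos (Nat.le_add_left _ _), Nat.add_sub_cancel]

theorem arcs_disj : Disjoint (C.G.arcs.erase C.a0) (C.abF.image (· + C.A)) := by
  rw [Finset.disjoint_left]
  rintro b hb hbi
  simp only [Finset.mem_image] at hbi
  obtain ⟨b0, -, rfl⟩ := hbi
  have := C.lt_A (Finset.mem_of_mem_erase hb)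
  omega

theorem inDeg'_split (v : ℕ) : inDeg C.G' v =
      ((C.G.arcs.erase C.a0).filter fun b => C.G'.tgt b = v).card +
      ((C.abF.image (· + C.A)).filter fun b => C.G'.tgt b = v).card := by
  show (((C.G.arcs.erase C.a0) ∪ C.abF.image (· + C.A)).filter _).card = _
  rw [Finset.filter_union, Finset.card_union_of_disjoint
    (Finset.disjoint_filter_filter C.arcs_disj)]

theorem outDeg'_split (v : ℕ) : outDeg C.G' v =
      ((C.G.arcs.erase C.a0).filter fun b => C.G'.src b = v).card +
      ((C.abF.image (· + C.A)).filter fun b => C.G'.src b = v).card := by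
  show (((C.G.arcs.erase C.a0) ∪ C.abF.image (· + C.A)).filter _).card = _
  rw [Finset.filter_union, Finset.card_union_of_disjoint
    (Finset.disjoint_filter_filter C.arcs_disj)]

end Cfg
namespace Cfg
variable (C : Cfg)

theorem image_tgt_card_zero {v : ℕ} (hv : v < C.V) :
    ((C.abF.image (· + C.A)).filter fun b => C.G'.tgt b = v).card = 0 := by
  rw [Finset.card_eq_zero, Finset.filter_eq_empty_iff]
  intro b hb
  simp only [Finset.mem_image] at hb
  obtain ⟨b0, -, rfl⟩ := hb
  rw [C.tgt'_shift]
  omega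

theorem image_src_card_zero {v : ℕ} (hv : v < C.V) :
    ((C.abF.image (· + C.A)).filter fun b => C.G'.src b = v).card = 0 := by
  rw [Finset.card_eq_zero, Finset.filter_eq_empty_iff]
  intro b hb
  simp only [Finset.mem_image] at hb
  obtain ⟨b0, -, rfl⟩ := hb
  rw [C.src'_shift]
  omega

theorem inDeg'_orig {v : ℕ} (hv : v ∈ C.G.verts) (hvh : v ≠ C.h) (hvc : v ≠ C.c) :
    inDeg C.G' v = inDeg C.G v := by
  rw [C.inDeg'_split, C.image_tgt_card_zero (C.lt_V hv), Nat.add_zero]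
  have heq : (C.G.arcs.erase C.a0).filter (fun b => C.G'.tgt b = v)
      = C.G.arcs.filter fun b => C.G.tgt b = v := by
    ext b
    simp only [Finset.mem_filter, Finset.mem_erase]
    constructor
    · rintro ⟨⟨hba0, hb⟩, htb⟩
      refine ⟨hb, ?_⟩
      by_cases h1 : b = C.a1
      · subst h1; rw [C.tgt'_a1] at htb; exact absurd htb.symm hvc
      by_cases h2 : b = C.a2
      · subst h2; rw [C.tgt'_a2] at htb; have := C.lt_V hv; omega
      · rwa [C.tgt'_orig hb h1 h2] at htb
    · rintro ⟨hb, htb⟩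
      have h1 : b ≠ C.a1 := by rintro rfl; exact hvh (htb.symm.trans C.hta1)
      have h2 : b ≠ C.a2 := by rintro rfl; exact hvh (htb.symm.trans C.hta2)
      have h0 : b ≠ C.a0 := by rintro rfl; exact hvc htb.symm
      exact ⟨⟨h0, hb⟩, by rwa [C.tgt'_orig hb h1 h2]⟩
  rw [heq]; rfl

theorem inDeg_c : inDeg C.G C.c = 1 := C.below_indeg C.c_below

theorem inDeg'_c : inDeg C.G' C.c = 1 := by
  rw [C.inDeg'_split, C.image_tgt_card_zero (C.lt_V C.c_mem)]
  have heq : (C.G.arcs.erase C.a0).filter (fun b => C.G'.tgt b = C.c) = {C.a1} := by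
    ext b
    simp only [Finset.mem_filter, Finset.mem_erase, Finset.mem_singleton]
    constructor
    · rintro ⟨⟨hba0, hb⟩, htb⟩
      by_contra h1
      by_cases h2 : b = C.a2
      · subst h2; rw [C.tgt'_a2] at htb; have := C.lt_V C.c_mem; omega
      · rw [C.tgt'_orig hb h1 h2] at htb
        exact hba0 (C.tgt_eq_c hb htb)
    · rintro rfl
      exact ⟨⟨C.a1_ne_a0, C.ha1⟩, C.tgt'_a1⟩
  rw [heq]; simp

theorem abF_tgt_eq {w : ℕ} (hw : BelowV C.G C.c w) (hwc : w ≠ C.c) :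
    C.abF.filter (fun b => C.G.tgt b = w) = C.G.arcs.filter fun b => C.G.tgt b = w := by
  ext b
  simp only [abF, Finset.mem_filter]
  constructor
  · rintro ⟨⟨hb, -⟩, htb⟩; exact ⟨hb, htb⟩
  · rintro ⟨hb, htb⟩
    refine ⟨⟨hb, ?_, by rw [htb]; exact hw⟩, htb⟩
    exact C.below_closed_rev hb (by rw [htb]; exact hw) (by rw [htb]; exact hwc)

theorem abF_src_eq {w : ℕ} (hw : BelowV C.G C.c w) :
    C.abF.filter (fun b => C.G.src b = w) = C.G.arcs.filter fun b => C.G.src b = w := by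
  ext b
  simp only [abF, Finset.mem_filter]
  constructor
  · rintro ⟨⟨hb, -⟩, hsb⟩; exact ⟨hb, hsb⟩
  · rintro ⟨hb, hsb⟩
    have hsbel : BelowV C.G C.c (C.G.src b) := by rw [hsb]; exact hw
    exact ⟨⟨hb, hsbel, C.below_step hb hsbel⟩, hsb⟩

theorem image_tgt_card_shift (w : ℕ) :
    ((C.abF.image (· + C.A)).filter fun b => C.G'.tgt b = w + C.V).card
      = (C.abF.filter fun b0 => C.G.tgt b0 = w).card := by
  rw [Finset.filter_image, Finset.card_image_of_injective _ (add_left_injective C.A)]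
  congr 1
  apply Finset.filter_congr
  intro b hb
  rw [C.tgt'_shift]
  constructor <;> omega

theorem image_src_card_shift (w : ℕ) :
    ((C.abF.image (· + C.A)).filter fun b => C.G'.src b = w + C.V).card
      = (C.abF.filter fun b0 => C.G.src b0 = w).card := by
  rw [Finset.filter_image, Finset.card_image_of_injective _ (add_left_injective C.A)]
  congr 1
  apply Finset.filter_congr
  intro b hb
  rw [C.src'_shift]
  constructor <;> omega

theorem inDeg'_shift {w : ℕ} (hw : BelowV C.G C.c w) : inDeg C.G' (w + C.V) = 1 := by
  rw [C.inDeg'_split, C.image_tgt_card_shift]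
  by_cases hwc : w = C.c
  · subst hwc
    have h1 : (C.G.arcs.erase C.a0).filter (fun b => C.G'.tgt b = C.c + C.V) = {C.a2} := by
      ext b
      simp only [Finset.mem_filter, Finset.mem_erase, Finset.mem_singleton]
      constructor
      · rintro ⟨⟨hba0, hb⟩, htb⟩
        by_contra h2
        by_cases h1' : b = C.a1
        · subst h1'; rw [C.tgt'_a1] at htb; have := C.V_pos; omega
        · rw [C.tgt'_orig hb h1' h2] at htb
          have := C.lt_V (C.phylo.tgt_mem b hb); omega
      · rintro rfl
        exact ⟨⟨C.a2_ne_a0, C.ha2⟩, C.tgt'_a2⟩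
    have h2 : C.abF.filter (fun b0 => C.G.tgt b0 = C.c) = ∅ := by
      rw [Finset.filter_eq_empty_iff]
      intro b hb htb
      simp only [abF, Finset.mem_filter] at hb
      have : b = C.a0 := C.tgt_eq_c hb.1 htb
      exact C.h_not_below (C.hsa0 ▸ this ▸ hb.2.1)
    rw [h1, h2]; simp
  · have h1 : (C.G.arcs.erase C.a0).filter (fun b => C.G'.tgt b = w + C.V) = ∅ := by
      rw [Finset.filter_eq_empty_iff]
      rintro b hb htb
      simp only [Finset.mem_erase] at hb
      by_cases h1' : b = C.a1
      · subst h1'; rw [C.tgt'_a1] at htb; have := C.lt_V C.c_mem; omega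
      by_cases h2' : b = C.a2
      · subst h2'; rw [C.tgt'_a2] at htb; omega
      · rw [C.tgt'_orig hb.2 h1' h2'] at htb
        have := C.lt_V (C.phylo.tgt_mem b hb.2); omega
    rw [h1, C.abF_tgt_eq hw hwc]
    have : (C.G.arcs.filter fun b => C.G.tgt b = w).card = 1 := C.below_indeg hw
    simp [this]

theorem outDeg'_orig {v : ℕ} (hv : v ∈ C.G.verts) (hvh : v ≠ C.h) :
    outDeg C.G' v = outDeg C.G v := by
  rw [C.outDeg'_split, C.image_src_card_zero (C.lt_V hv), Nat.add_zero]
  have heq : (C.G.arcs.erase C.a0).filter (fun b => C.G'.src b = v)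
      = C.G.arcs.filter fun b => C.G.src b = v := by
    ext b
    simp only [Finset.mem_filter, Finset.mem_erase]
    constructor
    · rintro ⟨⟨hba0, hb⟩, hsb⟩
      exact ⟨hb, by rwa [C.src'_orig hb] at hsb⟩
    · rintro ⟨hb, hsb⟩
      have h0 : b ≠ C.a0 := by rintro rfl; exact hvh (hsb.symm.trans C.hsa0)
      exact ⟨⟨h0, hb⟩, by rwa [C.src'_orig hb]⟩
  rw [heq]; rfl

theorem outDeg'_shift {w : ℕ} (hw : BelowV C.G C.c w) :
    outDeg C.G' (w + C.V) = outDeg C.G w := by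
  rw [C.outDeg'_split, C.image_src_card_shift]
  have h1 : (C.G.arcs.erase C.a0).filter (fun b => C.G'.src b = w + C.V) = ∅ := by
    rw [Finset.filter_eq_empty_iff]
    intro b hb hsb
    simp only [Finset.mem_erase] at hb
    rw [C.src'_orig hb.2] at hsb
    have := C.lt_V (C.phylo.src_mem b hb.2); omega
  rw [h1, C.abF_src_eq hw]
  simp [outDeg]

end Cfg
namespace Cfg
variable (C : Cfg)

theorem shift_walk_down {l : List ℕ} {u w : ℕ} (hl : IsWalk C.G' l u w) (hu : C.V ≤ u) :
    C.V ≤ w ∧ IsWalk C.G (l.map (· - C.A)) (u - C.V) (w - C.V) := by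
  induction l generalizing u with
  | nil =>
    obtain ⟨rfl, hmem⟩ := hl
    rcases C.mem_verts'.1 hmem with ⟨hv, -⟩ | ⟨w0, hw0, rfl⟩
    · exact absurd (C.lt_V hv) (not_lt.2 hu)
    · exact ⟨hu, rfl, by simpa using below_mem hw0⟩
  | cons b t ih =>
    obtain ⟨hb, hs, ht⟩ := hl
    rcases C.mem_arcs'.1 hb with ⟨hbo, -⟩ | ⟨b0, ⟨hb0, hsb0, htb0⟩, rfl⟩
    · rw [C.src'_orig hbo] at hs
      exact absurd (C.lt_V (hs ▸ C.phylo.src_mem b hbo)) (not_lt.2 (hs ▸ hu))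
    · rw [C.src'_shift] at hs
      rw [C.tgt'_shift] at ht
      obtain ⟨hw, hwalk⟩ := ih ht (Nat.le_add_left _ _)
      refine ⟨hw, ?_⟩
      simp only [List.map_cons, Nat.add_sub_cancel]
      exact ⟨hb0, by omega, by simpa using hwalk⟩

theorem stayS' {l : List ℕ} {u w : ℕ} (hl : IsWalk C.G' l u w) (hu : BelowV C.G C.c u) :
    BelowV C.G C.c w := by
  induction l generalizing u with
  | nil => exact hl.1 ▸ hu
  | cons b t ih =>
    obtain ⟨hb, hs, ht⟩ := hl
    rcases C.mem_arcs'.1 hb with ⟨hbo, hbne⟩ | ⟨b0, -, rfl⟩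
    · have h1 : b ≠ C.a1 := by rintro rfl; rw [C.src'_orig hbo] at hs; exact C.p1_not_below (show BelowV C.G C.c (C.G.src C.a1) by rw [hs]; exact hu)
      have h2 : b ≠ C.a2 := by rintro rfl; rw [C.src'_orig hbo] at hs; exact C.p2_not_below (show BelowV C.G C.c (C.G.src C.a2) by rw [hs]; exact hu)
      rw [C.src'_orig hbo] at hs
      rw [C.tgt'_orig hbo h1 h2] at ht
      exact ih ht (C.below_step hbo (hs ▸ hu))
    · rw [C.src'_shift] at hs
      have := C.lt_V (below_mem hu)
      omega

theorem walk_out {l : List ℕ} {u w : ℕ} (hl : IsWalk C.G' l u w)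
    (hw : ¬ BelowV C.G C.c w) (hwV : w < C.V) :
    IsWalk C.G l u w ∧ ∀ b ∈ l, b ∈ C.G.arcs ∧ b ≠ C.a0 ∧ b ≠ C.a1 ∧ b ≠ C.a2 := by
  induction l generalizing u with
  | nil =>
    obtain ⟨rfl, hmem⟩ := hl
    rcases C.mem_verts'.1 hmem with ⟨hv, -⟩ | ⟨w0, -, rfl⟩
    · exact ⟨⟨rfl, hv⟩, by simp⟩
    · omega
  | cons b t ih =>
    obtain ⟨hb, hs, ht⟩ := hl
    rcases C.mem_arcs'.1 hb with ⟨hbo, hbne⟩ | ⟨b0, ⟨hb0, hsb0, htb0⟩, rfl⟩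
    · have h1 : b ≠ C.a1 := by
        rintro rfl
        rw [C.tgt'_a1] at ht
        exact hw (C.stayS' ht C.c_below)
      have h2 : b ≠ C.a2 := by
        rintro rfl
        rw [C.tgt'_a2] at ht
        obtain ⟨hVw, -⟩ := C.shift_walk_down ht (Nat.le_add_left _ _)
        omega
      rw [C.src'_orig hbo] at hs
      rw [C.tgt'_orig hbo h1 h2] at ht
      obtain ⟨hwalk, hprops⟩ := ih ht
      refine ⟨⟨hbo, hs, hwalk⟩, ?_⟩
      intro x hx
      rcases List.mem_cons.mp hx with rfl | hx
      · exact ⟨hbo, hbne, h1, h2⟩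
      · exact hprops x hx
    · rw [C.tgt'_shift] at ht
      obtain ⟨hVw, -⟩ := C.shift_walk_down ht (Nat.le_add_left _ _)
      omega

theorem walk_neutral_to' {l : List ℕ} {u w : ℕ} (hl : IsWalk C.G l u w) (hw : w ≠ C.h)
    (hn : ∀ b ∈ l, b ≠ C.a0 ∧ b ≠ C.a1 ∧ b ≠ C.a2) : IsWalk C.G' l u w := by
  induction l generalizing u with
  | nil => exact ⟨hl.1, C.mem_verts'.2 (Or.inl ⟨hl.2, hl.1 ▸ hw⟩)⟩
  | cons b t ih =>
    obtain ⟨hb, hs, ht⟩ := hl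
    obtain ⟨h0, h1, h2⟩ := hn b (by simp)
    have htbh : C.G.tgt b ≠ C.h := by
      intro hh
      rcases C.tgt_eq_h hb hh with rfl | rfl
      · exact h1 rfl
      · exact h2 rfl
    refine ⟨C.mem_arcs'.2 (Or.inl ⟨hb, h0⟩), by rwa [C.src'_orig hb], ?_⟩
    rw [C.tgt'_orig hb h1 h2]
    exact ih ht (fun x hx => hn x (List.mem_cons_of_mem _ hx))

theorem walk_below_to' {l : List ℕ} {u w : ℕ} (hl : IsWalk C.G l u w)
    (hu : BelowV C.G C.c u) : IsWalk C.G' l u w := by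
  induction l generalizing u with
  | nil => exact ⟨hl.1, C.mem_verts'.2 (Or.inl ⟨hl.2, fun hh => C.h_not_below (hh ▸ hu)⟩)⟩
  | cons b t ih =>
    obtain ⟨hb, hs, ht⟩ := hl
    have hsb : BelowV C.G C.c (C.G.src b) := hs ▸ hu
    have h0 : b ≠ C.a0 := by rintro rfl; exact C.h_not_below (C.hsa0 ▸ hsb)
    have h1 : b ≠ C.a1 := by rintro rfl; exact C.p1_not_below hsb
    have h2 : b ≠ C.a2 := by rintro rfl; exact C.p2_not_below hsb
    refine ⟨C.mem_arcs'.2 (Or.inl ⟨hb, h0⟩), by rwa [C.src'_orig hb], ?_⟩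
    rw [C.tgt'_orig hb h1 h2]
    exact ih ht (C.below_step hb hsb)

theorem walk_below_shift_to' {l : List ℕ} {u w : ℕ} (hl : IsWalk C.G l u w)
    (hu : BelowV C.G C.c u) : IsWalk C.G' (l.map (· + C.A)) (u + C.V) (w + C.V) := by
  induction l generalizing u with
  | nil =>
    obtain ⟨rfl, -⟩ := hl
    exact ⟨rfl, C.mem_verts'.2 (Or.inr ⟨u, hu, rfl⟩)⟩
  | cons b t ih =>
    obtain ⟨hb, hs, ht⟩ := hl
    have hsb : BelowV C.G C.c (C.G.src b) := hs ▸ hu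
    refine ⟨C.mem_arcs'.2 (Or.inr ⟨b, ⟨hb, hsb, C.below_step hb hsb⟩, rfl⟩), ?_, ?_⟩
    · rw [C.src'_shift, hs]
    · rw [C.tgt'_shift]
      exact ih ht (C.below_step hb hsb)

end Cfg
namespace Cfg
variable (C : Cfg)

noncomputable def rt : ℕ := C.phylo.root_exu.exists.choose

theorem rt_root : IsRootN C.G C.rt := C.phylo.root_exu.exists.choose_spec

theorem root_eq {x : ℕ} (hx : IsRootN C.G x) : x = C.rt :=
  C.phylo.root_exu.unique hx C.rt_root

theorem rt_not_below : ¬ BelowV C.G C.c C.rt := fun hh => by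
  have h1 := C.below_indeg hh
  have h2 := C.rt_root.2
  omega

theorem rt_ne_h : C.rt ≠ C.h := fun hh => by
  have h1 := C.rt_root.2
  have h2 := C.hret.2.1
  rw [hh] at h1; omega

theorem rt_ne_c : C.rt ≠ C.c := fun hh => by
  have h1 := C.rt_root.2
  have h2 := C.inDeg_c
  rw [hh] at h1; omega

theorem p1_ne_c : C.p1 ≠ C.c := by
  intro hh
  refine C.phylo.acyclic C.c [C.a1, C.a0] (by simp) ?_
  exact ⟨C.ha1, hh ▸ rfl, C.ha0, C.hsa0.trans C.hta1.symm, rfl, C.c_mem⟩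

theorem p2_ne_c : C.p2 ≠ C.c := by
  intro hh
  refine C.phylo.acyclic C.c [C.a2, C.a0] (by simp) ?_
  exact ⟨C.ha2, hh ▸ rfl, C.ha0, C.hsa0.trans C.hta2.symm, rfl, C.c_mem⟩

theorem walk_in_S_down {l : List ℕ} {u w : ℕ} (hl : IsWalk C.G' l u w)
    (hu : BelowV C.G C.c u) : IsWalk C.G l u w := by
  induction l generalizing u with
  | nil => exact ⟨hl.1, below_mem hu⟩
  | cons b t ih =>
    obtain ⟨hb, hs, ht⟩ := hl
    rcases C.mem_arcs'.1 hb with ⟨hbo, hbne⟩ | ⟨b0, -, rfl⟩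
    · rw [C.src'_orig hbo] at hs
      have hsb : BelowV C.G C.c (C.G.src b) := hs ▸ hu
      have h1 : b ≠ C.a1 := by rintro rfl; exact C.p1_not_below hsb
      have h2 : b ≠ C.a2 := by rintro rfl; exact C.p2_not_below hsb
      rw [C.tgt'_orig hbo h1 h2] at ht
      exact ⟨hbo, hs, ih ht (C.below_step hbo hsb)⟩
    · rw [C.src'_shift] at hs
      have := C.lt_V (below_mem hu)
      omega

theorem rt_root' : IsRootN C.G' C.rt := by
  refine ⟨C.mem_verts'.2 (Or.inl ⟨C.rt_root.1, C.rt_ne_h⟩), ?_⟩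
  rw [C.inDeg'_orig C.rt_root.1 C.rt_ne_h C.rt_ne_c]
  exact C.rt_root.2

theorem root'_eq {x : ℕ} (hx : IsRootN C.G' x) : x = C.rt := by
  obtain ⟨hxv, hxd⟩ := hx
  rcases C.mem_verts'.1 hxv with ⟨hx, hxh⟩ | ⟨w, hw, rfl⟩
  · by_cases hxc : x = C.c
    · subst hxc; rw [C.inDeg'_c] at hxd; omega
    · rw [C.inDeg'_orig hx hxh hxc] at hxd
      exact C.root_eq ⟨hx, hxd⟩
  · rw [C.inDeg'_shift hw] at hxd; omega

theorem phylo' : IsPhylo C.G' := by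
  constructor
  · -- src_mem
    intro b hb
    rcases C.mem_arcs'.1 hb with ⟨hbo, hbne⟩ | ⟨b0, ⟨hb0, hsb0, -⟩, rfl⟩
    · rw [C.src'_orig hbo]
      refine C.mem_verts'.2 (Or.inl ⟨C.phylo.src_mem b hbo, fun hh => hbne (C.src_eq_h hbo hh)⟩)
    · rw [C.src'_shift]
      exact C.mem_verts'.2 (Or.inr ⟨_, hsb0, rfl⟩)
  · -- tgt_mem
    intro b hb
    rcases C.mem_arcs'.1 hb with ⟨hbo, hbne⟩ | ⟨b0, ⟨hb0, -, htb0⟩, rfl⟩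
    · by_cases h1 : b = C.a1
      · subst h1; rw [C.tgt'_a1]; exact C.mem_verts'.2 (Or.inl ⟨C.c_mem, C.c_ne_h⟩)
      by_cases h2 : b = C.a2
      · subst h2; rw [C.tgt'_a2]; exact C.mem_verts'.2 (Or.inr ⟨C.c, C.c_below, rfl⟩)
      · rw [C.tgt'_orig hbo h1 h2]
        refine C.mem_verts'.2 (Or.inl ⟨C.phylo.tgt_mem b hbo, fun hh => ?_⟩)
        rcases C.tgt_eq_h hbo hh with rfl | rfl
        · exact h1 rfl
        · exact h2 rfl
    · rw [C.tgt'_shift]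
      exact C.mem_verts'.2 (Or.inr ⟨_, htb0, rfl⟩)
  · -- no_loop
    intro b hb
    rcases C.mem_arcs'.1 hb with ⟨hbo, hbne⟩ | ⟨b0, ⟨hb0, -, -⟩, rfl⟩
    · by_cases h1 : b = C.a1
      · subst h1; rw [C.tgt'_a1, C.src'_orig C.ha1]; exact C.p1_ne_c
      by_cases h2 : b = C.a2
      · subst h2
        rw [C.tgt'_a2, C.src'_orig C.ha2]
        have := C.lt_V (C.phylo.src_mem _ C.ha2)
        omega
      · rw [C.tgt'_orig hbo h1 h2, C.src'_orig hbo]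
        exact C.phylo.no_loop b hbo
    · rw [C.src'_shift, C.tgt'_shift]
      have := C.phylo.no_loop b0 hb0
      omega
  · -- acyclic
    intro v l hlne hl
    by_cases hV : C.V ≤ v
    · obtain ⟨-, hwalk⟩ := C.shift_walk_down hl hV
      exact C.phylo.acyclic (v - C.V) _ (by simpa using hlne) hwalk
    · by_cases hS : BelowV C.G C.c v
      · exact C.phylo.acyclic v l hlne (C.walk_in_S_down hl hS)
      · exact C.phylo.acyclic v l hlne (C.walk_out hl hS (not_le.1 hV)).1
  · -- root_exu
    exact ⟨C.rt, C.rt_root', fun x hx => C.root'_eq hx⟩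
  · -- root_out
    intro r hr
    rw [C.root'_eq hr, C.outDeg'_orig C.rt_root.1 C.rt_ne_h]
    exact C.phylo.root_out _ C.rt_root
  · -- types
    intro v hv
    rcases C.mem_verts'.1 hv with ⟨hvm, hvh⟩ | ⟨w, hw, rfl⟩
    · have hin : inDeg C.G' v = inDeg C.G v := by
        by_cases hvc : v = C.c
        · subst hvc; rw [C.inDeg'_c, C.inDeg_c]
        · exact C.inDeg'_orig hvm hvh hvc
      have hout := C.outDeg'_orig hvm hvh
      rcases C.phylo.types v hvm with hr | hlf | htv | hrv
      · exact Or.inl ⟨hv, by rw [hin]; exact hr.2⟩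
      · exact Or.inr (Or.inl ⟨hv, by rw [hin]; exact hlf.2.1, by rw [hout]; exact hlf.2.2⟩)
      · exact Or.inr (Or.inr (Or.inl ⟨hv, by rw [hin]; exact htv.2.1, by rw [hout]; exact htv.2.2⟩))
      · exact Or.inr (Or.inr (Or.inr ⟨hv, by rw [hin]; exact hrv.2.1, by rw [hout]; exact hrv.2.2⟩))
    · have hin := C.inDeg'_shift hw
      have hout := C.outDeg'_shift hw
      have hwm := below_mem hw
      rcases C.phylo.types w hwm with hr | hlf | htv | hrv
      · exfalso; have h1 := C.below_indeg hw; rw [hr.2] at h1; omega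
      · exact Or.inr (Or.inl ⟨hv, hin, by rw [hout]; exact hlf.2.2⟩)
      · exact Or.inr (Or.inr (Or.inl ⟨hv, hin, by rw [hout]; exact htv.2.2⟩))
      · exact absurd hrv (C.hlow w hw)

end Cfg
namespace Cfg
variable (C : Cfg)

theorem leaf'_orig {v : ℕ} (hv : v ∈ C.G.verts) (hvh : v ≠ C.h) :
    IsLeafN C.G' v ↔ IsLeafN C.G v := by
  have hin : inDeg C.G' v = inDeg C.G v := by
    by_cases hvc : v = C.c
    · subst hvc; rw [C.inDeg'_c, C.inDeg_c]
    · exact C.inDeg'_orig hv hvh hvc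
  have hout := C.outDeg'_orig hv hvh
  constructor
  · rintro ⟨-, h1, h2⟩; exact ⟨hv, by rwa [hin] at h1, by rwa [hout] at h2⟩
  · rintro ⟨-, h1, h2⟩
    exact ⟨C.mem_verts'.2 (Or.inl ⟨hv, hvh⟩), by rwa [hin], by rwa [hout]⟩

theorem leaf'_shift {w : ℕ} (hw : BelowV C.G C.c w) :
    IsLeafN C.G' (w + C.V) ↔ IsLeafN C.G w := by
  constructor
  · rintro ⟨-, -, h2⟩
    exact ⟨below_mem hw, C.below_indeg hw, by rwa [C.outDeg'_shift hw] at h2⟩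
  · rintro ⟨-, -, h2⟩
    exact ⟨C.mem_verts'.2 (Or.inr ⟨w, hw, rfl⟩), C.inDeg'_shift hw, by rwa [C.outDeg'_shift hw]⟩

theorem h_not_leaf : ¬ IsLeafN C.G C.h := by
  rintro ⟨-, -, h2⟩
  have := C.hret.2.2
  omega

theorem retic'_iff {v : ℕ} : IsReticN C.G' v ↔ (v ∈ C.G.verts ∧ v ≠ C.h ∧ IsReticN C.G v) := by
  constructor
  · rintro ⟨hv, hin, hout⟩
    rcases C.mem_verts'.1 hv with ⟨hvm, hvh⟩ | ⟨w, hw, rfl⟩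
    · by_cases hvc : v = C.c
      · subst hvc; rw [C.inDeg'_c] at hin; omega
      · rw [C.inDeg'_orig hvm hvh hvc] at hin
        rw [C.outDeg'_orig hvm hvh] at hout
        exact ⟨hvm, hvh, hvm, hin, hout⟩
    · rw [C.inDeg'_shift hw] at hin; omega
  · rintro ⟨hvm, hvh, -, hin, hout⟩
    have hvc : v ≠ C.c := by rintro rfl; have := C.inDeg_c; omega
    exact ⟨C.mem_verts'.2 (Or.inl ⟨hvm, hvh⟩), by rwa [C.inDeg'_orig hvm hvh hvc],
      by rwa [C.outDeg'_orig hvm hvh]⟩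

open Classical in
theorem reticCard_lt : reticCard C.G' < reticCard C.G := by
  unfold reticCard
  have hsub : (C.G'.verts.filter fun v => IsReticN C.G' v) ⊆
      (C.G.verts.filter fun v => IsReticN C.G v).erase C.h := by
    intro v hv
    simp only [Finset.mem_filter] at hv
    obtain ⟨h1, h2, h3⟩ := C.retic'_iff.1 hv.2
    exact Finset.mem_erase.2 ⟨h2, Finset.mem_filter.2 ⟨h1, h3⟩⟩
  have hmem : C.h ∈ C.G.verts.filter fun v => IsReticN C.G v :=
    Finset.mem_filter.2 ⟨C.hret.1, C.hret⟩
  calc (C.G'.verts.filter fun v => IsReticN C.G' v).card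
      ≤ ((C.G.verts.filter fun v => IsReticN C.G v).erase C.h).card :=
        Finset.card_le_card hsub
    _ < _ := Finset.card_erase_lt_of_mem hmem

end Cfg
namespace Cfg
variable (C : Cfg)

def tau (b : ℕ) : List ℕ :=
  if C.A ≤ b then [b - C.A]
  else if b = C.a1 then [C.a1, C.a0]
  else if b = C.a2 then [C.a2, C.a0]
  else [b]

def pim (v : ℕ) : ℕ := if C.V ≤ v then v - C.V else v

theorem pim_lt {v : ℕ} (hv : v ∈ C.G.verts) : C.pim v = v := by
  unfold pim; rw [if_neg (not_le.2 (C.lt_V hv))]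

theorem pim_shift (v : ℕ) : C.pim (v + C.V) = v := by
  unfold pim; rw [if_pos (Nat.le_add_left _ _), Nat.add_sub_cancel]

theorem tau_orig {b : ℕ} (hb : b ∈ C.G.arcs) (h1 : b ≠ C.a1) (h2 : b ≠ C.a2) :
    C.tau b = [b] := by
  unfold tau; rw [if_neg (not_le.2 (C.lt_A hb)), if_neg h1, if_neg h2]

theorem tau_a1 : C.tau C.a1 = [C.a1, C.a0] := by
  unfold tau; rw [if_neg (not_le.2 (C.lt_A C.ha1)), if_pos rfl]

theorem tau_a2 : C.tau C.a2 = [C.a2, C.a0] := by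
  unfold tau; rw [if_neg (not_le.2 (C.lt_A C.ha2)), if_neg (Ne.symm C.hne12), if_pos rfl]

theorem tau_shift (b : ℕ) : C.tau (b + C.A) = [b] := by
  unfold tau; rw [if_pos (Nat.le_add_left _ _), Nat.add_sub_cancel]

theorem tau_ne_nil (b : ℕ) : C.tau b ≠ [] := by
  unfold tau
  split
  · simp
  · split
    · simp
    · split <;> simp

theorem flatMap_tau_nil {l : List ℕ} (h : l.flatMap C.tau = []) : l = [] := by
  cases l with
  | nil => rfl
  | cons b t =>
    rw [List.flatMap_cons] at h
    exact absurd (List.append_eq_nil_iff.mp h).1 (C.tau_ne_nil b)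

theorem flatMap_tau_neutral {l : List ℕ} (h : ∀ b ∈ l, b ∈ C.G.arcs ∧ b ≠ C.a1 ∧ b ≠ C.a2) :
    l.flatMap C.tau = l := by
  induction l with
  | nil => simp
  | cons b t ih =>
    rw [List.flatMap_cons, C.tau_orig (h b (by simp)).1 (h b (by simp)).2.1 (h b (by simp)).2.2,
      ih fun x hx => h x (List.mem_cons_of_mem _ hx)]
    rfl

theorem flatMap_tau_shift (l : List ℕ) : (l.map (· + C.A)).flatMap C.tau = l := by
  induction l with
  | nil => simp
  | cons b t ih => rw [List.map_cons, List.flatMap_cons, C.tau_shift, ih]; rfl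

theorem walk_master {l : List ℕ} {u w : ℕ} (hl : IsWalk C.G' l u w) :
    IsWalk C.G (l.flatMap C.tau) (C.pim u) (C.pim w) := by
  induction l generalizing u with
  | nil =>
    obtain ⟨rfl, hm⟩ := hl
    refine ⟨rfl, ?_⟩
    rcases C.mem_verts'.1 hm with ⟨hv, -⟩ | ⟨w0, hw0, rfl⟩
    · rw [C.pim_lt hv]; exact hv
    · rw [C.pim_shift]; exact below_mem hw0
  | cons b t ih =>
    obtain ⟨hb, hs, ht⟩ := hl
    rw [List.flatMap_cons]
    rcases C.mem_arcs'.1 hb with ⟨hbo, hbne⟩ | ⟨b0, ⟨hb0, -, -⟩, rfl⟩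
    · rw [C.src'_orig hbo] at hs
      have hpu : C.pim u = u := by rw [← hs]; exact C.pim_lt (C.phylo.src_mem b hbo)
      by_cases h1 : b = C.a1
      · subst h1
        rw [C.tau_a1]
        have hc : C.G'.tgt C.a1 = C.c := C.tgt'_a1
        have ihc := ih ht
        rw [hc, C.pim_lt C.c_mem] at ihc
        exact ⟨C.ha1, hs.trans hpu.symm, C.ha0, C.hsa0.trans C.hta1.symm, ihc⟩
      by_cases h2 : b = C.a2
      · subst h2
        rw [C.tau_a2]
        have hc : C.G'.tgt C.a2 = C.c + C.V := C.tgt'_a2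
        have ihc := ih ht
        rw [hc, C.pim_shift] at ihc
        exact ⟨C.ha2, hs.trans hpu.symm, C.ha0, C.hsa0.trans C.hta2.symm, ihc⟩
      · have htb : C.G'.tgt b = C.G.tgt b := C.tgt'_orig hbo h1 h2
        rw [C.tau_orig hbo h1 h2]
        have ihc := ih ht
        rw [htb, C.pim_lt (C.phylo.tgt_mem b hbo)] at ihc
        exact ⟨hbo, hs.trans hpu.symm, ihc⟩
    · rw [C.tau_shift]
      rw [C.src'_shift] at hs
      have hpu : C.pim u = C.G.src b0 := by rw [← hs, C.pim_shift]
      have ihc := ih ht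
      rw [C.tgt'_shift, C.pim_shift] at ihc
      exact ⟨hb0, hpu.symm, ihc⟩

theorem src'_lt_V {b : ℕ} (hb : b ∈ C.G'.arcs) (hA : ¬ C.A ≤ b) : C.G'.src b < C.V := by
  rcases C.mem_arcs'.1 hb with ⟨hbo, -⟩ | ⟨b0, -, rfl⟩
  · rw [C.src'_orig hbo]; exact C.lt_V (C.phylo.src_mem b hbo)
  · exact absurd (Nat.le_add_left _ _) hA

theorem src'_ge_V {b : ℕ} (hb : b ∈ C.G'.arcs) (hA : C.A ≤ b) : C.V ≤ C.G'.src b := by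
  rcases C.mem_arcs'.1 hb with ⟨hbo, -⟩ | ⟨b0, -, rfl⟩
  · exact absurd hA (not_le.2 (C.lt_A hbo))
  · rw [C.src'_shift]; exact Nat.le_add_left _ _

theorem tau_head (b : ℕ) : (C.tau b).head? = some (if C.A ≤ b then b - C.A else b) := by
  unfold tau
  by_cases h : C.A ≤ b
  · simp [h]
  · rw [if_neg h, if_neg h]
    split
    · rename_i h1; simp [h1]
    · split
      · rename_i h2; simp [h2]
      · simp

theorem F_inj {l : List ℕ} : ∀ {l' : List ℕ} {u w w' : ℕ}, IsWalk C.G' l u w →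
    IsWalk C.G' l' u w' → l.flatMap C.tau = l'.flatMap C.tau → l = l' := by
  induction l with
  | nil =>
    intro l' u w w' _ _ heq
    exact (C.flatMap_tau_nil heq.symm).symm
  | cons b t ih =>
    intro l' u w w' h1 h2 heq
    cases l' with
    | nil =>
      rw [List.flatMap_nil] at heq
      exact absurd (C.flatMap_tau_nil heq) (by simp)
    | cons b' t' =>
      have hb : b ∈ C.G'.arcs := h1.1
      have hb' : b' ∈ C.G'.arcs := h2.1
      have hu : C.G'.src b = C.G'.src b' := h1.2.1.trans h2.2.1.symm
      have hbb' : b = b' := by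
        have hh := congrArg List.head? heq
        rw [List.flatMap_cons, List.flatMap_cons] at hh
        rw [List.head?_append_of_ne_nil _ (C.tau_ne_nil b),
          List.head?_append_of_ne_nil _ (C.tau_ne_nil b'), C.tau_head, C.tau_head] at hh
        by_cases hA : C.A ≤ b <;> by_cases hA' : C.A ≤ b'
        · rw [if_pos hA, if_pos hA'] at hh
          simp only [Option.some.injEq] at hh
          omega
        · exfalso
          have k1 := C.src'_ge_V hb hA
          have k2 := C.src'_lt_V hb' hA'
          omega
        · exfalso
          have k1 := C.src'_lt_V hb hA
          have k2 := C.src'_ge_V hb' hA'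
          omega
        · rw [if_neg hA, if_neg hA'] at hh
          simpa using hh
      subst hbb'
      rw [List.flatMap_cons, List.flatMap_cons] at heq
      have hteq := List.append_cancel_left heq
      rw [ih h1.2.2 h2.2.2 hteq]

end Cfg
namespace Cfg
variable (C : Cfg)

theorem nPaths_not_below {v : ℕ} (hv : v ∈ C.G.verts) (hvh : v ≠ C.h)
    (hvS : ¬ BelowV C.G C.c v) (u : ℕ) : nPaths C.G u v = nPaths C.G' u v := by
  unfold nPaths
  congr 1
  ext l
  constructor
  · intro hl
    have h0 := C.no_a0_of_not_below hl hvS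
    have h12 := C.no_a12 hl hvh h0
    exact C.walk_neutral_to' hl hvh fun b hb => ⟨h0 b hb, (h12 b hb).1, (h12 b hb).2⟩
  · intro hl
    exact (C.walk_out hl hvS (C.lt_V hv)).1

theorem nPaths_below {v : ℕ} (hv : BelowV C.G C.c v) :
    nPaths C.G C.rt v = nPaths C.G' C.rt v + nPaths C.G' C.rt (v + C.V) := by
  classical
  set W : Set (List ℕ) := {l | IsWalk C.G l C.rt v} with hW
  set W1 : Set (List ℕ) := {l | IsWalk C.G' l C.rt v} with hW1
  set W2 : Set (List ℕ) := {l | IsWalk C.G' l C.rt (v + C.V)} with hW2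
  have hmaps : ∀ l ∈ W1 ∪ W2, l.flatMap C.tau ∈ W := by
    rintro l (hl | hl)
    · have := C.walk_master hl
      rwa [C.pim_lt C.rt_root.1, C.pim_lt (below_mem hv)] at this
    · have := C.walk_master hl
      rwa [C.pim_lt C.rt_root.1, C.pim_shift] at this
  have hinj : Set.InjOn (fun l => l.flatMap C.tau) (W1 ∪ W2) := by
    rintro l hl l' hl' heq
    have g1 : IsWalk C.G' l C.rt (if l ∈ W1 then v else v + C.V) := by
      rcases hl with hl | hl
      · rw [if_pos hl]; exact hl
      · by_cases hmem : l ∈ W1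
        · rw [if_pos hmem]; exact hmem
        · rw [if_neg hmem]; exact hl
    have g2 : IsWalk C.G' l' C.rt (if l' ∈ W1 then v else v + C.V) := by
      rcases hl' with hl' | hl'
      · rw [if_pos hl']; exact hl'
      · by_cases hmem : l' ∈ W1
        · rw [if_pos hmem]; exact hmem
        · rw [if_neg hmem]; exact hl'
    exact C.F_inj g1 g2 heq
  have hsurj : ∀ l ∈ W, ∃ l' ∈ W1 ∪ W2, l'.flatMap C.tau = l := by
    intro l hl
    obtain ⟨l₁, l₂, rfl, hw1, hw2, hp1, hp2⟩ := C.decompS hl C.rt_not_below hv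
    have hl1ne : l₁ ≠ [] := by
      rintro rfl
      exact C.rt_ne_h hw1.1
    obtain ⟨L, blast, rfl⟩ := (List.eq_nil_or_concat l₁).resolve_left hl1ne
    rw [List.concat_eq_append] at hw1 hp1 ⊢
    obtain ⟨x, hxL, hxb⟩ := isWalk_append_inv C.phylo.src_mem hw1
    obtain ⟨hblast, hsblast, htblast, -⟩ := hxb
    have hLprops : ∀ b ∈ L, b ∈ C.G.arcs ∧ b ≠ C.a1 ∧ b ≠ C.a2 := by
      have hLa0 : ∀ b ∈ L, b ≠ C.a0 := fun b hb =>
        (hp1 b (List.mem_append_left _ hb)).1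
      have hxh : x ≠ C.h := by
        rintro rfl
        exact (hp1 blast (List.mem_append_right _ (by simp))).1 (C.src_eq_h hblast hsblast)
      have h12 := C.no_a12 hxL hxh hLa0
      exact fun b hb => ⟨isWalk_arcs_mem hxL b hb, (h12 b hb).1, (h12 b hb).2⟩
    have hFL : L.flatMap C.tau = L := C.flatMap_tau_neutral hLprops
    have hl2props : ∀ b ∈ l₂, b ∈ C.G.arcs ∧ b ≠ C.a1 ∧ b ≠ C.a2 := by
      intro b hb
      refine ⟨isWalk_arcs_mem hw2 b hb, ?_, ?_⟩
      · rintro rfl; exact C.p1_not_below (hp2 _ hb)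
      · rintro rfl; exact C.p2_not_below (hp2 _ hb)
    have hFl2 : l₂.flatMap C.tau = l₂ := C.flatMap_tau_neutral hl2props
    have hwL' : IsWalk C.G' L C.rt x := by
      refine C.walk_neutral_to' hxL ?_ ?_
      · rintro rfl
        exact (hp1 blast (List.mem_append_right _ (by simp))).1 (C.src_eq_h hblast hsblast)
      · intro b hb
        exact ⟨(hp1 b (List.mem_append_left _ hb)).1, (hLprops b hb).2.1, (hLprops b hb).2.2⟩
    rcases C.tgt_eq_h hblast htblast with rfl | rfl
    · refine ⟨L ++ C.a1 :: l₂, Or.inl ?_, ?_⟩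
      · refine isWalk_append hwL' ⟨C.mem_arcs'.2 (Or.inl ⟨C.ha1, C.a1_ne_a0⟩), (C.src'_orig C.ha1).trans hsblast, ?_⟩
        rw [C.tgt'_a1]
        exact C.walk_below_to' hw2 C.c_below
      · rw [List.flatMap_append, List.flatMap_cons, hFL, C.tau_a1, hFl2]
        simp
    · refine ⟨L ++ C.a2 :: (l₂.map (· + C.A)), Or.inr ?_, ?_⟩
      · refine isWalk_append hwL' ⟨C.mem_arcs'.2 (Or.inl ⟨C.ha2, C.a2_ne_a0⟩), (C.src'_orig C.ha2).trans hsblast, ?_⟩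
        rw [C.tgt'_a2]
        exact C.walk_below_shift_to' hw2 C.c_below
      · rw [List.flatMap_append, List.flatMap_cons, hFL, C.tau_a2, C.flatMap_tau_shift]
        simp
  have himg : (fun l => l.flatMap C.tau) '' (W1 ∪ W2) = W := by
    apply Set.Subset.antisymm
    · rintro y ⟨l, hl, rfl⟩; exact hmaps l hl
    · intro l hl
      obtain ⟨l', hl', heq⟩ := hsurj l hl
      exact ⟨l', hl', heq⟩
  have hdisj : Disjoint W1 W2 := by
    rw [Set.disjoint_left]
    intro l h1 h2
    have := isWalk_end_unique h1 h2
    have := C.V_pos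
    omega
  have hcard : W.ncard = W1.ncard + W2.ncard := by
    rw [← himg, Set.ncard_image_of_injOn hinj,
      Set.ncard_union_eq hdisj (finite_walks C.phylo' _ _) (finite_walks C.phylo' _ _)]
  exact hcard

end Cfg
namespace Cfg
variable (C : Cfg)

theorem cut_a0 : IsCutArc C.G C.a0 := by
  refine ⟨C.ha0, fun hrel => ?_⟩
  have key : ∀ x, Relation.ReflTransGen
      (fun x y => ∃ b ∈ C.G.arcs, b ≠ C.a0 ∧
        ((C.G.src b = x ∧ C.G.tgt b = y) ∨ (C.G.src b = y ∧ C.G.tgt b = x)))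
      (C.G.src C.a0) x → ¬ BelowV C.G C.c x := by
    intro x hx
    induction hx with
    | refl => rw [C.hsa0]; exact C.h_not_below
    | tail hyz hstep ih =>
      obtain ⟨b, hb, hbne, hcase⟩ := hstep
      intro hzS
      rcases hcase with ⟨hs, ht⟩ | ⟨hs, ht⟩
      · subst hs; subst ht
        by_cases hzc : C.G.tgt b = C.c
        · exact hbne (C.tgt_eq_c hb hzc)
        · exact ih (C.below_closed_rev hb hzS hzc)
      · subst hs; subst ht
        exact ih (C.below_step hb hzS)
  exact key _ hrel C.c_below

end Cfg

theorem key_step (m : List ℕ) (R : MLNet) (hR : MLRealizes R m)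
    (hex : ∃ v, IsReticN R.net v) :
    ∃ R' : MLNet, SplitRel R R' ∧ MLRealizes R' m ∧ reticCard R'.net < reticCard R.net := by
  classical
  obtain ⟨hphy, hlab, hsum⟩ := hR
  have hne : (R.net.verts.filter fun v => IsReticN R.net v).Nonempty := by
    obtain ⟨v, hv⟩ := hex; exact ⟨v, Finset.mem_filter.2 ⟨hv.1, hv⟩⟩
  obtain ⟨h, hhmem, hhmin⟩ := Finset.exists_min_image _
    (fun v => (R.net.verts.filter fun w => BelowV R.net v w).card) hne
  have hret : IsReticN R.net h := (Finset.mem_filter.1 hhmem).2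
  obtain ⟨a0, ha0eq⟩ := Finset.card_eq_one.mp hret.2.2
  have ha0 : a0 ∈ R.net.arcs ∧ R.net.src a0 = h := by
    have : a0 ∈ R.net.arcs.filter fun a => R.net.src a = h := by rw [ha0eq]; simp
    simpa using this
  obtain ⟨a1, ha1mem, a2, ha2mem, hne12⟩ := Finset.one_lt_card.mp (show
    1 < (R.net.arcs.filter fun a => R.net.tgt a = h).card from by
      have h2 := hret.2.1; unfold inDeg at h2; omega)
  simp only [Finset.mem_filter] at ha1mem ha2mem
  have hlow : ∀ w, BelowV R.net (R.net.tgt a0) w → ¬ IsReticN R.net w := by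
    intro w hw hwret
    have hwh : w ≠ h := by
      intro hwh
      obtain ⟨l, hl⟩ := hw
      exact hphy.acyclic h (a0 :: l) (by simp) ⟨ha0.1, ha0.2, hwh ▸ hl⟩
    have hhc : BelowV R.net h (R.net.tgt a0) :=
      ⟨[a0], ha0.1, ha0.2, rfl, hphy.tgt_mem _ ha0.1⟩
    have hhw : BelowV R.net h w := below_trans hhc hw
    have hsub : (R.net.verts.filter fun x => BelowV R.net w x)
        ⊆ R.net.verts.filter fun x => BelowV R.net h x := by
      intro x hx
      simp only [Finset.mem_filter] at hx ⊢
      exact ⟨hx.1, below_trans hhw hx.2⟩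
    have hhmemq : h ∈ R.net.verts.filter fun x => BelowV R.net h x :=
      Finset.mem_filter.2 ⟨hret.1, ⟨[], rfl, hret.1⟩⟩
    have hhnot : h ∉ R.net.verts.filter fun x => BelowV R.net w x := by
      simp only [Finset.mem_filter]
      rintro ⟨-, lwh, hlwh⟩
      obtain ⟨lhw, hlhw⟩ := hhw
      refine hphy.acyclic h (lhw ++ lwh) ?_ (isWalk_append hlhw hlwh)
      intro hcon
      rw [List.append_eq_nil_iff] at hcon
      rw [hcon.2] at hlwh
      rw [hcon.1] at hlhw
      exact hwh (hlwh.1.symm ▸ hlhw.1.symm)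
    have hlt : (R.net.verts.filter fun x => BelowV R.net w x).card
        < (R.net.verts.filter fun x => BelowV R.net h x).card :=
      Finset.card_lt_card ⟨hsub, fun hc => hhnot (hc hhmemq)⟩
    have := hhmin w (Finset.mem_filter.2 ⟨hwret.1, hwret⟩)
    omega
  set C : Cfg := (⟨R.net, hphy, h, a0, a1, a2, hret, ha0.1, ha0.2, ha1mem.1,
    ha1mem.2, ha2mem.1, ha2mem.2, hne12, hlow⟩ : Cfg) with hC
  set R' : MLNet := ⟨C.G', fun v => if C.V ≤ v then R.lab (v - C.V) else R.lab v⟩ with hR'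
  have hverts : (↑R'.net.verts : Set ℕ) =
      ((↑R.net.verts : Set ℕ) \ {h}) ∪ ((· + C.V) '' {w | BelowV R.net C.c w}) := by
    ext v
    simp only [Finset.mem_coe, Set.mem_union, Set.mem_diff, Set.mem_singleton_iff,
      Set.mem_image, Set.mem_setOf_eq]
    rw [C.mem_verts']
    constructor
    · rintro (⟨h1, h2⟩ | ⟨w, hw, rfl⟩)
      · exact Or.inl ⟨h1, h2⟩
      · exact Or.inr ⟨w, hw, rfl⟩
    · rintro (⟨h1, h2⟩ | ⟨w, hw, rfl⟩)
      · exact Or.inl ⟨h1, h2⟩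
      · exact Or.inr ⟨w, hw, rfl⟩
  have harcs : (↑R'.net.arcs : Set ℕ) =
      ((↑R.net.arcs : Set ℕ) \ {a0}) ∪ ((· + C.A) '' arcsBelow R.net C.c) := by
    ext b
    simp only [Finset.mem_coe, Set.mem_union, Set.mem_diff, Set.mem_singleton_iff,
      Set.mem_image, arcsBelow, Set.mem_setOf_eq]
    rw [C.mem_arcs']
    constructor
    · rintro (⟨h1, h2⟩ | ⟨b0, hb0, rfl⟩)
      · exact Or.inl ⟨h1, h2⟩
      · exact Or.inr ⟨b0, hb0, rfl⟩
    · rintro (⟨h1, h2⟩ | ⟨b0, hb0, rfl⟩)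
      · exact Or.inl ⟨h1, h2⟩
      · exact Or.inr ⟨b0, hb0, rfl⟩
  have hsplit : SplitRel R R' := by
    refine ⟨h, C.p1, C.p2, C.c, a0, a1, a2, (· + C.V), (· + C.A),
      hret, ⟨ha0.1, ha0.2, rfl⟩, C.cut_a0, ⟨ha1mem.1, rfl, ha1mem.2⟩,
      ⟨ha2mem.1, rfl, ha2mem.2⟩, hne12, Ne.symm C.a1_ne_a0, Ne.symm C.a2_ne_a0,
      fun x _ y _ hxy => by simpa using hxy,
      fun w _ hmem => absurd (C.lt_V hmem) (Nat.not_lt.2 (Nat.le_add_left _ _)),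
      fun x _ y _ hxy => by simpa using hxy,
      fun b _ hmem => absurd (C.lt_A hmem) (Nat.not_lt.2 (Nat.le_add_left _ _)),
      hverts, harcs,
      fun b hb h0 h1 h2 => ⟨C.src'_orig hb, C.tgt'_orig hb h1 h2⟩,
      C.src'_orig ha1mem.1, C.tgt'_a1, C.src'_orig ha2mem.1, C.tgt'_a2,
      fun b hb => ⟨C.src'_shift, C.tgt'_shift⟩,
      fun v hv hvh => if_neg (not_le.2 (C.lt_V hv)),
      fun w hw => by
        show (if C.V ≤ w + C.V then R.lab (w + C.V - C.V) else R.lab (w + C.V)) = R.lab w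
        rw [if_pos (Nat.le_add_left _ _), Nat.add_sub_cancel]⟩
  refine ⟨R', hsplit, ⟨C.phylo', ?_, ?_⟩, C.reticCard_lt⟩
  · -- labels of leaves bounded
    intro v hv
    rcases C.mem_verts'.1 hv.1 with ⟨h1, h2⟩ | ⟨w, hw, rfl⟩
    · have hleaf := (C.leaf'_orig h1 h2).1 hv
      show (if C.V ≤ v then R.lab (v - C.V) else R.lab v) < m.length
      rw [if_neg (not_le.2 (C.lt_V h1))]
      exact hlab v hleaf
    · have hleaf := (C.leaf'_shift hw).1 hv
      show (if C.V ≤ w + C.V then R.lab (w + C.V - C.V) else R.lab (w + C.V)) < m.length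
      rw [if_pos (Nat.le_add_left _ _), Nat.add_sub_cancel]
      exact hlab w hleaf
  · -- path sums
    intro i hi r' hr'
    obtain rfl := C.root'_eq hr'
    have hbase := hsum i hi C.rt C.rt_root
    have hset : R'.net.verts.filter (fun v => IsLeafN R'.net v ∧ R'.lab v = i)
        = (R.net.verts.filter fun v => IsLeafN R.net v ∧ R.lab v = i) ∪
          ((R.net.verts.filter fun v => IsLeafN R.net v ∧ R.lab v = i).filter
            fun v => BelowV R.net C.c v).image (· + C.V) := by
      ext v
      simp only [Finset.mem_filter, Finset.mem_union, Finset.mem_image]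
      constructor
      · rintro ⟨hv, hleaf, hlabi⟩
        rcases C.mem_verts'.1 hv with ⟨h1, h2⟩ | ⟨w, hw, rfl⟩
        · left
          refine ⟨h1, (C.leaf'_orig h1 h2).1 hleaf, ?_⟩
          replace hlabi : (if C.V ≤ v then R.lab (v - C.V) else R.lab v) = i := hlabi
          rw [if_neg (not_le.2 (C.lt_V h1))] at hlabi
          exact hlabi
        · right
          refine ⟨w, ⟨⟨below_mem hw, (C.leaf'_shift hw).1 hleaf, ?_⟩, hw⟩, rfl⟩
          replace hlabi : (if C.V ≤ w + C.V then R.lab (w + C.V - C.V) else R.lab (w + C.V)) = i := hlabi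
          rw [if_pos (Nat.le_add_left _ _), Nat.add_sub_cancel] at hlabi
          exact hlabi
      · rintro (⟨h1, hleaf, hlabi⟩ | ⟨w, ⟨⟨hw1, hwleaf, hwlab⟩, hwbelow⟩, rfl⟩)
        · have h2 : v ≠ C.h := by rintro rfl; exact C.h_not_leaf hleaf
          refine ⟨C.mem_verts'.2 (Or.inl ⟨h1, h2⟩), (C.leaf'_orig h1 h2).2 hleaf, ?_⟩
          show (if C.V ≤ v then R.lab (v - C.V) else R.lab v) = i
          rw [if_neg (not_le.2 (C.lt_V h1))]
          exact hlabi
        · refine ⟨C.mem_verts'.2 (Or.inr ⟨w, hwbelow, rfl⟩), (C.leaf'_shift hwbelow).2 hwleaf, ?_⟩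
          show (if C.V ≤ w + C.V then R.lab (w + C.V - C.V) else R.lab (w + C.V)) = i
          rw [if_pos (Nat.le_add_left _ _), Nat.add_sub_cancel]
          exact hwlab
    have hdisj : Disjoint (R.net.verts.filter fun v => IsLeafN R.net v ∧ R.lab v = i)
        (((R.net.verts.filter fun v => IsLeafN R.net v ∧ R.lab v = i).filter
            fun v => BelowV R.net C.c v).image (· + C.V)) := by
      rw [Finset.disjoint_right]
      intro v hv hv'
      simp only [Finset.mem_image] at hv
      obtain ⟨w, -, rfl⟩ := hv
      have hmem : w + C.V ∈ R.net.verts := (Finset.mem_filter.1 hv').1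
      have := C.lt_V hmem
      omega
    rw [hset, Finset.sum_union hdisj, Finset.sum_image (fun x _ y _ hxy => by omega)]
    rw [← Finset.sum_filter_add_sum_filter_not
      (R.net.verts.filter fun v => IsLeafN R.net v ∧ R.lab v = i)
      (fun v => BelowV R.net C.c v) (fun v => nPaths R'.net C.rt v)]
    rw [← hbase, ← Finset.sum_filter_add_sum_filter_not
      (R.net.verts.filter fun v => IsLeafN R.net v ∧ R.lab v = i)
      (fun v => BelowV R.net C.c v) (fun v => nPaths R.net C.rt v)]
    have e1 : ∑ v ∈ ((R.net.verts.filter fun v => IsLeafN R.net v ∧ R.lab v = i).filter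
          fun v => BelowV R.net C.c v), nPaths R.net C.rt v
        = (∑ v ∈ ((R.net.verts.filter fun v => IsLeafN R.net v ∧ R.lab v = i).filter
          fun v => BelowV R.net C.c v), nPaths R'.net C.rt v)
        + ∑ v ∈ ((R.net.verts.filter fun v => IsLeafN R.net v ∧ R.lab v = i).filter
          fun v => BelowV R.net C.c v), nPaths R'.net C.rt (v + C.V) := by
      rw [← Finset.sum_add_distrib]
      exact Finset.sum_congr rfl fun v hv => C.nPaths_below (Finset.mem_filter.1 hv).2
    have e2 : ∑ v ∈ ((R.net.verts.filter fun v => IsLeafN R.net v ∧ R.lab v = i).filter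
          fun v => ¬ BelowV R.net C.c v), nPaths R'.net C.rt v
        = ∑ v ∈ ((R.net.verts.filter fun v => IsLeafN R.net v ∧ R.lab v = i).filter
          fun v => ¬ BelowV R.net C.c v), nPaths R.net C.rt v := by
      refine Finset.sum_congr rfl fun v hv => ?_
      obtain ⟨hvLf, hnb⟩ := Finset.mem_filter.1 hv
      obtain ⟨hvm, hvleaf, -⟩ := Finset.mem_filter.1 hvLf
      have hvh : v ≠ C.h := by rintro rfl; exact C.h_not_leaf hvleaf
      exact (C.nPaths_not_below hvm hvh hnb C.rt).symm
    rw [e1, e2]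
    omega
/-- Every multiple-labelled network realizing a ploidy profile
`m` can be transformed by a finite sequence of split operations into a
multiple-labelled tree realizing `m`. -/
theorem splits_reach_tree (m : List ℕ) (hm : IsProfileL m)
    (N : MLNet) (hN : MLRealizes N m) :
    ∃ T : MLNet, Relation.ReflTransGen SplitRel N T ∧ IsMLTree T ∧
      MLRealizes T m := by
  classical
  suffices H : ∀ (n : ℕ) (N : MLNet), reticCard N.net ≤ n → MLRealizes N m →
      ∃ T : MLNet, Relation.ReflTransGen SplitRel N T ∧ IsMLTree T ∧ MLRealizes T m from
    H (reticCard N.net) N le_rfl hN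
  intro n
  induction n with
  | zero =>
    intro N hle hN
    refine ⟨N, Relation.ReflTransGen.refl, fun v hv => ?_, hN⟩
    have hmem : v ∈ (N.net.verts.filter fun w => IsReticN N.net w) := by
      classical
      exact Finset.mem_filter.2 ⟨hv.1, hv⟩
    have : 0 < reticCard N.net := by
      unfold reticCard
      exact Finset.card_pos.2 ⟨v, hmem⟩
    omega
  | succ n ih =>
    intro N hle hN
    by_cases hex : ∃ v, IsReticN N.net v
    · obtain ⟨R', h1, h2, h3⟩ := key_step m N hN hex
      obtain ⟨T, hT1, hT2, hT3⟩ := ih R' (by omega) h2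
      exact ⟨T, Relation.ReflTransGen.head h1 hT1, hT2, hT3⟩
    · exact ⟨N, Relation.ReflTransGen.refl, fun v hv => hex ⟨v, hv⟩, hN⟩

end Ploidy
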